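/- arXiv:2102.13151 — 12 statements merged into one kernel-verified Lean document; each statement's English description precedes it below -/
import Mathlib

section
/- Let B be a symmetric N×N infection rate matrix with an equitable partition π = {N_1,...,N_r}, and suppose the curing rates satisfy δ_i = δ_j whenever nodes i and j lie in the same cell. Let v : [0,∞) → ℝ^N be a solution of NIMFA with v_i(0) = v_j(0) whenever i and j lie in the same cell. Then v_i(t) = v_j(t) for all t ≥ 0 and all nodes i,j in the same cell; moreover, picking a representative node i_l in each cell N_l, the reduced-size vector v^π(t) = (v_{i_1}(t),...,v_{i_r}(t))ᵀ satisfies dv^π(t)/dt = -S^π v^π(t) + diag(u_r - v^π(t)) B^π v^π(t), where S^π = diag(δ_{i_1},...,δ_{i_r}), B^π is the quotient matrix and u_r is the r×1 all-one vector. -/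
open Matrix Finset

/-- **Theorem 1, reduction of NIMFA by an equitable partition.**
The partition of the node set `{1,...,N}` into `r` cells is encoded by the cell-assignment
map `c : Fin N → Fin r`; the cells are nonempty since each has a representative `rep l`.
If `B` is symmetric with an equitable partition, the curing rates are constant on cells and
the initial viral states agree within cells, then the viral states agree within cells for all
`t ≥ 0`, and the reduced-size vector `v^π(t) = (v_{rep 1}(t),...,v_{rep r}(t))` solves the
reduced NIMFA system with the quotient matrix `B^π`. -/
theorem nimfa_equitable_partition_reduction
    {N r : ℕ} (B : Matrix (Fin N) (Fin N) ℝ) (δ : Fin N → ℝ)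
    (c : Fin N → Fin r) (rep : Fin r → Fin N)
    (hrep : ∀ l, c (rep l) = l)
    (hB_symm : B.IsSymm)
    (hB_nonneg : ∀ i j, 0 ≤ B i j)
    (hδ_pos : ∀ i, 0 < δ i)
    (hequitable : ∀ i j, c i = c j → ∀ l : Fin r,
      ∑ k ∈ univ.filter (fun k => c k = l), B i k
        = ∑ k ∈ univ.filter (fun k => c k = l), B j k)
    (hδ_cell : ∀ i j, c i = c j → δ i = δ j)
    (v : ℝ → Fin N → ℝ)
    (hsol : ∀ t : ℝ, 0 ≤ t → ∀ i, HasDerivAt (fun s => v s i)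
      (-δ i * v t i + (1 - v t i) * ∑ j, B i j * v t j) t)
    (hinit : ∀ i j, c i = c j → v 0 i = v 0 j) :
    (∀ t : ℝ, 0 ≤ t → ∀ i j, c i = c j → v t i = v t j) ∧
    (∀ t : ℝ, 0 ≤ t → ∀ p : Fin r,
      HasDerivAt (fun s => v s (rep p))
        (-δ (rep p) * v t (rep p) + (1 - v t (rep p)) *
          ∑ l : Fin r,
            (∑ k ∈ univ.filter (fun k => c k = l), B (rep p) k) * v t (rep l)) t) := by
  classical
  set S : ℝ → Fin N → ℝ := fun t i => ∑ j, B i j * v t j with hSdef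
  set F : ℝ → Fin N → ℝ := fun t i => -δ i * v t i + (1 - v t i) * S t i with hFdef
  set e : ℝ → Fin N → ℝ := fun t k => v t k - v t (rep (c k)) with hedef
  set e' : ℝ → Fin N → ℝ := fun t k => F t k - F t (rep (c k)) with he'def
  -- the key within-cell equality
  have key : ∀ t : ℝ, 0 ≤ t → ∀ i, v t i = v t (rep (c i)) := by
    intro T hT i
    -- derivative of e
    have hderiv : ∀ t : ℝ, 0 ≤ t → HasDerivAt e (e' t) t := by
      intro t ht
      rw [hasDerivAt_pi]
      intro k
      exact (hsol t ht k).sub (hsol t ht (rep (c k)))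
    -- continuity of v on [0, T]
    have hvc : ContinuousOn v (Set.Icc 0 T) := by
      rw [continuousOn_pi]
      intro k t ht
      exact ((hsol t ht.1 k).continuousAt).continuousWithinAt
    -- bound on v
    obtain ⟨C, hC⟩ := (isCompact_Icc (a := (0:ℝ)) (b := T)).exists_bound_of_continuousOn hvc
    have hC0 : 0 ≤ C := le_trans (norm_nonneg _) (hC 0 ⟨le_refl 0, hT⟩)
    have hvb : ∀ t ∈ Set.Icc (0:ℝ) T, ∀ k, |v t k| ≤ C := by
      intro t ht k
      calc |v t k| = ‖v t k‖ := (Real.norm_eq_abs _).symm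
        _ ≤ ‖v t‖ := norm_le_pi_norm (v t) k
        _ ≤ C := hC t ht
    -- matrix and rate bounds
    set CB : ℝ := ∑ j, ∑ k, B j k with hCBdef
    have hCB : ∀ i, ∑ k, B i k ≤ CB :=
      fun i => Finset.single_le_sum (fun j _ => Finset.sum_nonneg fun k _ => hB_nonneg j k)
        (mem_univ i)
    have hCB0 : 0 ≤ CB :=
      Finset.sum_nonneg fun j _ => Finset.sum_nonneg fun k _ => hB_nonneg j k
    set D : ℝ := ∑ j, δ j with hDdef
    have hD : ∀ i, δ i ≤ D :=
      fun i => Finset.single_le_sum (fun j _ => (hδ_pos j).le) (mem_univ i)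
    have hD0 : 0 ≤ D := Finset.sum_nonneg fun j _ => (hδ_pos j).le
    set K : ℝ := D + CB * C + (1 + C) * (2 * CB) with hKdef
    have hK0 : 0 ≤ K := by positivity
    -- equitable consequence: S-differences are controlled by e
    have hSdiff : ∀ (i : Fin N) (t : ℝ),
        S t i - S t (rep (c i)) = ∑ k, (B i k - B (rep (c i)) k) * e t k := by
      intro i t
      have hz : ∑ k, (B i k - B (rep (c i)) k) * v t (rep (c k)) = 0 := by
        rw [← Finset.sum_fiberwise univ c
          (fun k => (B i k - B (rep (c i)) k) * v t (rep (c k)))]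
        refine Finset.sum_eq_zero fun l _ => ?_
        have h1 : ∑ k ∈ univ.filter (fun k => c k = l),
            (B i k - B (rep (c i)) k) * v t (rep (c k))
            = ∑ k ∈ univ.filter (fun k => c k = l),
              (B i k - B (rep (c i)) k) * v t (rep l) := by
          refine Finset.sum_congr rfl fun k hk => ?_
          simp only [mem_filter] at hk
          rw [hk.2]
        rw [h1, ← Finset.sum_mul, Finset.sum_sub_distrib,
          hequitable i (rep (c i)) (hrep (c i)).symm l, sub_self, zero_mul]
      have : S t i - S t (rep (c i)) = ∑ k, (B i k - B (rep (c i)) k) * v t k := by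
        simp only [hSdef, ← Finset.sum_sub_distrib]
        exact Finset.sum_congr rfl fun k _ => by ring
      rw [this]
      calc ∑ k, (B i k - B (rep (c i)) k) * v t k
          = (∑ k, (B i k - B (rep (c i)) k) * e t k)
            + ∑ k, (B i k - B (rep (c i)) k) * v t (rep (c k)) := by
            rw [← Finset.sum_add_distrib]
            refine Finset.sum_congr rfl fun k _ => ?_
            simp only [hedef]; ring
        _ = ∑ k, (B i k - B (rep (c i)) k) * e t k := by rw [hz, add_zero]
    -- bound on |S t i|
    have hSb : ∀ t ∈ Set.Icc (0:ℝ) T, ∀ i, |S t i| ≤ CB * C := by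
      intro t ht i
      calc |S t i| ≤ ∑ j, |B i j * v t j| := Finset.abs_sum_le_sum_abs _ _
        _ ≤ ∑ j, B i j * C := by
            refine Finset.sum_le_sum fun j _ => ?_
            rw [abs_mul, abs_of_nonneg (hB_nonneg i j)]
            exact mul_le_mul_of_nonneg_left (hvb t ht j) (hB_nonneg i j)
        _ = (∑ j, B i j) * C := (Finset.sum_mul _ _ _).symm
        _ ≤ CB * C := mul_le_mul_of_nonneg_right (hCB i) hC0
    -- bound on the S-difference
    have hSdb : ∀ (t : ℝ) (i : Fin N),
        |S t i - S t (rep (c i))| ≤ (2 * CB) * ‖e t‖ := by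
      intro t i
      rw [hSdiff i t]
      calc |∑ k, (B i k - B (rep (c i)) k) * e t k|
          ≤ ∑ k, |(B i k - B (rep (c i)) k) * e t k| := Finset.abs_sum_le_sum_abs _ _
        _ ≤ ∑ k, (B i k + B (rep (c i)) k) * ‖e t‖ := by
            refine Finset.sum_le_sum fun k _ => ?_
            rw [abs_mul]
            refine mul_le_mul ?_ ?_ (abs_nonneg _) ?_
            · refine (abs_sub _ _).trans ?_
              rw [abs_of_nonneg (hB_nonneg i k), abs_of_nonneg (hB_nonneg (rep (c i)) k)]
            · calc |e t k| = ‖e t k‖ := (Real.norm_eq_abs _).symm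
                _ ≤ ‖e t‖ := norm_le_pi_norm (e t) k
            · have := hB_nonneg i k; have := hB_nonneg (rep (c i)) k; linarith
        _ = (∑ k, (B i k + B (rep (c i)) k)) * ‖e t‖ := (Finset.sum_mul _ _ _).symm
        _ ≤ (2 * CB) * ‖e t‖ := by
            refine mul_le_mul_of_nonneg_right ?_ (norm_nonneg _)
            rw [Finset.sum_add_distrib]
            have h1 := hCB i; have h2 := hCB (rep (c i))
            linarith
    -- the Grönwall bound hypothesis
    have hbound : ∀ t ∈ Set.Ico (0:ℝ) T, ‖e' t‖ ≤ K * ‖e t‖ + 0 := by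
      intro t ht
      have htI : t ∈ Set.Icc (0:ℝ) T := ⟨ht.1, ht.2.le⟩
      rw [add_zero]
      refine (pi_norm_le_iff_of_nonneg (mul_nonneg hK0 (norm_nonneg _))).2 fun k => ?_
      have hδk : δ (rep (c k)) = δ k := hδ_cell (rep (c k)) k (hrep (c k))
      have hek : ‖e t k‖ ≤ ‖e t‖ := norm_le_pi_norm (e t) k
      have hrw : e' t k = -δ k * e t k - e t k * S t (rep (c k))
          + (1 - v t k) * (S t k - S t (rep (c k))) := by
        simp only [he'def, hFdef, hedef, hδk]; ring
      rw [Real.norm_eq_abs, hrw]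
      have h1 : |(-δ k * e t k)| ≤ D * ‖e t‖ := by
        rw [abs_mul, abs_neg, abs_of_pos (hδ_pos k)]
        refine mul_le_mul (hD k) ?_ (abs_nonneg _) hD0
        rw [← Real.norm_eq_abs]; exact hek
      have h2 : |e t k * S t (rep (c k))| ≤ (CB * C) * ‖e t‖ := by
        rw [abs_mul, mul_comm]
        refine mul_le_mul (hSb t htI _) ?_ (abs_nonneg _) (by positivity)
        rw [← Real.norm_eq_abs]; exact hek
      have h3 : |(1 - v t k) * (S t k - S t (rep (c k)))|
          ≤ (1 + C) * ((2 * CB) * ‖e t‖) := by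
        rw [abs_mul]
        refine mul_le_mul ?_ (hSdb t k) (abs_nonneg _) (by positivity)
        refine (abs_sub _ _).trans ?_
        rw [abs_one]
        have := hvb t htI k
        linarith
      calc |(-δ k * e t k - e t k * S t (rep (c k))
            + (1 - v t k) * (S t k - S t (rep (c k))))|
          ≤ |(-δ k * e t k)| + |e t k * S t (rep (c k))|
            + |(1 - v t k) * (S t k - S t (rep (c k)))| := by
            refine (abs_add_le _ _).trans (add_le_add_left ?_ _)
            exact abs_sub _ _
        _ ≤ D * ‖e t‖ + (CB * C) * ‖e t‖ + (1 + C) * ((2 * CB) * ‖e t‖) := by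
            exact add_le_add (add_le_add h1 h2) h3
        _ = K * ‖e t‖ := by rw [hKdef]; ring
    -- continuity of e, initial condition
    have hec : ContinuousOn e (Set.Icc 0 T) := by
      rw [continuousOn_pi]
      intro k
      exact ((continuousOn_pi.1 hvc) k).sub ((continuousOn_pi.1 hvc) (rep (c k)))
    have he0 : ‖e 0‖ ≤ 0 := by
      have : e 0 = 0 := by
        funext k
        simp only [hedef, Pi.zero_apply]
        rw [hinit k (rep (c k)) (hrep (c k)).symm, sub_self]
      rw [this, norm_zero]
    have hd' : ∀ t ∈ Set.Ico (0:ℝ) T, HasDerivWithinAt e (e' t) (Set.Ici t) t :=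
      fun t ht => (hderiv t ht.1).hasDerivWithinAt
    have hg := norm_le_gronwallBound_of_norm_deriv_right_le hec hd' he0 hbound T
      ⟨hT, le_refl T⟩
    rw [gronwallBound_ε0_δ0] at hg
    have heT : e T = 0 := by
      have := norm_nonneg (e T)
      have hz : ‖e T‖ = 0 := le_antisymm hg this
      exact norm_eq_zero.1 hz
    have := congrFun heT i
    simp only [hedef, Pi.zero_apply, sub_eq_zero] at this
    exact this
  constructor
  · intro t ht i j hij
    rw [key t ht i, key t ht j, hij]
  · intro t ht p
    have h := hsol t ht (rep p)
    have hsum : ∑ j, B (rep p) j * v t j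
        = ∑ l : Fin r, (∑ k ∈ univ.filter (fun k => c k = l), B (rep p) k) * v t (rep l) := by
      rw [← Finset.sum_fiberwise univ c (fun j => B (rep p) j * v t j)]
      refine Finset.sum_congr rfl fun l _ => ?_
      rw [Finset.sum_mul]
      refine Finset.sum_congr rfl fun k hk => ?_
      simp only [mem_filter] at hk
      have : v t k = v t (rep l) := by
        rw [key t ht k, hk.2]
      rw [this]
    rw [hsum] at h
    exact h
end

section
/- Let B be a symmetric N×N infection rate matrix with an equitable partition π = {N_1,...,N_r}, suppose δ_i = δ_j whenever i,j lie in the same cell, and let v : [0,∞) → ℝ^N be a solution of NIMFA with v_i(0) = v_j(0) whenever i,j lie in the same cell. Then for all t ≥ 0 the viral state satisfies v(t) = Σ_{l=1}^r c_l(t) y_l with c_l(t) = √|N_l| · v^π_l(t), where y_1,...,y_r are the normalized indicator vectors of π and v^π(t) is the reduced-size viral state solving dv^π/dt = -S^π v^π + diag(u_r - v^π) B^π v^π; in particular v(t) lies in the subspace span{y_1,...,y_r} for every t ≥ 0. -/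
open Matrix Finset

/-- The normalized indicator vector `y_l` of the cell `N_l = {i | c i = l}`:
`(y_l)_i = 1/√|N_l|` if `i ∈ N_l` and `0` otherwise. -/
noncomputable def indVec {N r : ℕ} (c : Fin N → Fin r) (l : Fin r) : Fin N → ℝ :=
  fun i => if c i = l then
    1 / Real.sqrt ((Finset.univ.filter (fun k => c k = l)).card) else 0

/-- **Corollary 1, proper orthogonal decomposition from an equitable partition.**
Under the hypotheses of Theorem 1 (symmetric `B` with an equitable partition, curing rates and
initial states constant on cells), the viral state satisfies
`v(t) = Σ_l c_l(t) y_l` with `c_l(t) = √|N_l| · v^π_l(t)` (with `v^π_l(t) = v_{rep l}(t)` the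
reduced-size viral state); in particular `v(t) ∈ span{y_1,...,y_r}` for all `t ≥ 0`. -/
theorem nimfa_equitable_partition_pod
    {N r : ℕ} (B : Matrix (Fin N) (Fin N) ℝ) (δ : Fin N → ℝ)
    (c : Fin N → Fin r) (rep : Fin r → Fin N)
    (hrep : ∀ l, c (rep l) = l)
    (hB_symm : B.IsSymm)
    (hB_nonneg : ∀ i j, 0 ≤ B i j)
    (hδ_pos : ∀ i, 0 < δ i)
    (hequitable : ∀ i j, c i = c j → ∀ l : Fin r,
      ∑ k ∈ univ.filter (fun k => c k = l), B i k
        = ∑ k ∈ univ.filter (fun k => c k = l), B j k)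
    (hδ_cell : ∀ i j, c i = c j → δ i = δ j)
    (v : ℝ → Fin N → ℝ)
    (hsol : ∀ t : ℝ, 0 ≤ t → ∀ i, HasDerivAt (fun s => v s i)
      (-δ i * v t i + (1 - v t i) * ∑ j, B i j * v t j) t)
    (hinit : ∀ i j, c i = c j → v 0 i = v 0 j) :
    ∀ t : ℝ, 0 ≤ t →
      (∀ i, v t i = ∑ l : Fin r,
        (Real.sqrt ((Finset.univ.filter (fun k => c k = l)).card) * v t (rep l))
          * indVec c l i) ∧
      v t ∈ Submodule.span ℝ (Set.range (indVec c)) := by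
  -- notation
  set F : ℝ → Fin N → ℝ := fun t i => -δ i * v t i + (1 - v t i) * ∑ j, B i j * v t j with hF
  set d : ℝ → Fin N → ℝ := fun t i => v t i - v t (rep (c i)) with hd
  set f : ℝ → ℝ := fun t => ∑ i, (d t i)^2 with hfdef
  have hfnn : ∀ t, 0 ≤ f t := fun t => Finset.sum_nonneg fun i _ => sq_nonneg _
  have hcrep : ∀ i : Fin N, c i = c (rep (c i)) := fun i => (hrep (c i)).symm
  -- continuity of coordinates
  have hcont : ∀ i, ContinuousOn (fun t => v t i) (Set.Ici (0:ℝ)) := by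
    intro i t ht
    exact ((hsol t ht i).continuousAt).continuousWithinAt
  -- key equitable identity
  have hS : ∀ t, ∀ i, (∑ k, B i k * v t k) - (∑ k, B (rep (c i)) k * v t k)
      = ∑ k, (B i k - B (rep (c i)) k) * d t k := by
    intro t i
    have hzero : ∑ k, (B i k - B (rep (c i)) k) * v t (rep (c k)) = 0 := by
      rw [← Finset.sum_fiberwise_of_maps_to (fun k _ => Finset.mem_univ (c k))
        (fun k => (B i k - B (rep (c i)) k) * v t (rep (c k)))]
      refine Finset.sum_eq_zero fun l _ => ?_
      have : ∀ k ∈ univ.filter (fun k => c k = l),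
          (B i k - B (rep (c i)) k) * v t (rep (c k))
            = (B i k - B (rep (c i)) k) * v t (rep l) := by
        intro k hk
        rw [Finset.mem_filter] at hk
        rw [hk.2]
      rw [Finset.sum_congr rfl this, ← Finset.sum_mul, Finset.sum_sub_distrib,
        hequitable i (rep (c i)) (hcrep i) l, sub_self, zero_mul]
    have expand : ∑ k, (B i k - B (rep (c i)) k) * d t k
        = (∑ k, (B i k - B (rep (c i)) k) * v t k)
          - ∑ k, (B i k - B (rep (c i)) k) * v t (rep (c k)) := by
      rw [← Finset.sum_sub_distrib]
      refine Finset.sum_congr rfl fun k _ => ?_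
      simp only [hd]; ring
    rw [expand, hzero, sub_zero, ← Finset.sum_sub_distrib]
    refine Finset.sum_congr rfl fun k _ => by ring
  -- derivative of f
  have hderiv : ∀ t : ℝ, 0 ≤ t →
      HasDerivAt f (∑ i, 2 * d t i * (F t i - F t (rep (c i)))) t := by
    intro t ht
    have hdd : ∀ i, HasDerivAt (fun s => d s i) (F t i - F t (rep (c i))) t :=
      fun i => (hsol t ht i).sub (hsol t ht (rep (c i)))
    have : HasDerivAt (fun s => ∑ i, (d s i)^2)
        (∑ i, 2 * d t i * (F t i - F t (rep (c i)))) t := by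
      refine HasDerivAt.fun_sum fun i _ => ?_
      have := (hdd i).fun_pow 2
      simpa [pow_one, mul_comm, mul_assoc, mul_left_comm] using this
    exact this
  -- main claim: cell constancy
  have key : ∀ t : ℝ, 0 ≤ t → ∀ i, v t i = v t (rep (c i)) := by
    intro t₀ ht₀
    suffices hft : f t₀ = 0 by
      intro i
      have h0 : ∀ k ∈ (univ : Finset (Fin N)), (d t₀ k)^2 = 0 :=
        (Finset.sum_eq_zero_iff_of_nonneg (fun k _ => sq_nonneg _)).1 hft
      have := h0 i (Finset.mem_univ i)
      have : d t₀ i = 0 := by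
        exact pow_eq_zero_iff (n := 2) (by norm_num) |>.1 this
      simpa [hd, sub_eq_zero] using this
    -- bound M on |v| over [0, t₀]
    obtain ⟨C, hC⟩ : ∃ C, ∀ t ∈ Set.Icc (0:ℝ) t₀, ‖(v t : Fin N → ℝ)‖ ≤ C := by
      have hc : ContinuousOn (fun t => (v t : Fin N → ℝ)) (Set.Icc 0 t₀) := by
        refine continuousOn_pi.2 fun i => (hcont i).mono ?_
        exact fun x hx => hx.1
      exact (isCompact_Icc.exists_bound_of_continuousOn hc)
    set M : ℝ := max C 0 with hM
    have hM0 : 0 ≤ M := le_max_right _ _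
    have hvM : ∀ t ∈ Set.Icc (0:ℝ) t₀, ∀ i, |v t i| ≤ M := by
      intro t ht i
      calc |v t i| = ‖(v t : Fin N → ℝ) i‖ := rfl
        _ ≤ ‖(v t : Fin N → ℝ)‖ := norm_le_pi_norm _ i
        _ ≤ C := hC t ht
        _ ≤ M := le_max_left _ _
    -- constants
    set Dm : ℝ := ∑ i, δ i with hDm
    set Bm : ℝ := ∑ i, ∑ j, B i j with hBm
    have hDm0 : 0 ≤ Dm := Finset.sum_nonneg fun i _ => (hδ_pos i).le
    have hBm0 : 0 ≤ Bm := Finset.sum_nonneg fun i _ =>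
      Finset.sum_nonneg fun j _ => hB_nonneg i j
    have hδle : ∀ i, δ i ≤ Dm :=
      fun i => Finset.single_le_sum (f := δ) (fun j _ => (hδ_pos j).le) (Finset.mem_univ i)
    have hrowle : ∀ i, ∑ j, B i j ≤ Bm :=
      fun i => Finset.single_le_sum (f := fun i => ∑ j, B i j)
        (fun j _ => Finset.sum_nonneg fun k _ => hB_nonneg j k) (Finset.mem_univ i)
    have hBle : ∀ i j, B i j ≤ Bm := fun i j =>
      le_trans (Finset.single_le_sum (f := fun j => B i j)
        (fun k _ => hB_nonneg i k) (Finset.mem_univ j)) (hrowle i)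
    set L : ℝ := Dm + Bm * M + (1 + M) * (2 * Bm * N) with hL
    have hL0 : 0 ≤ L := by positivity
    set K : ℝ := 2 * N * L with hK
    -- the Gronwall bound
    have hbound : ∀ t ∈ Set.Ico (0:ℝ) t₀,
        ‖∑ i, 2 * d t i * (F t i - F t (rep (c i)))‖ ≤ K * ‖f t‖ + 0 := by
      intro t ht
      have htIcc : t ∈ Set.Icc (0:ℝ) t₀ := ⟨ht.1, ht.2.le⟩
      set s : ℝ := Real.sqrt (f t) with hs
      have hs0 : 0 ≤ s := Real.sqrt_nonneg _
      have hss : s * s = f t := Real.mul_self_sqrt (hfnn t)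
      have hdle : ∀ k, |d t k| ≤ s := by
        intro k
        have h1 : (d t k)^2 ≤ f t :=
          Finset.single_le_sum (f := fun k => (d t k)^2)
            (fun j _ => sq_nonneg _) (Finset.mem_univ k)
        have := Real.sqrt_le_sqrt h1
        rwa [Real.sqrt_sq_eq_abs] at this
      have hFd : ∀ i, |F t i - F t (rep (c i))| ≤ L * s := by
        intro i
        set j : Fin N := rep (c i) with hj
        have hδij : δ j = δ i := (hδ_cell i j (hcrep i)).symm
        have hexp : F t i - F t j
            = -(δ i + ∑ k, B j k * v t k) * d t i
              + (1 - v t i) * ∑ k, (B i k - B j k) * d t k := by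
          simp only [hF, hd, hj]
          rw [hδij]
          linear_combination (1 - v t i) * (hS t i)
        rw [hexp]
        have hSj : |∑ k, B j k * v t k| ≤ Bm * M := by
          calc |∑ k, B j k * v t k| ≤ ∑ k, |B j k * v t k| := Finset.abs_sum_le_sum_abs _ _
            _ ≤ ∑ k, B j k * M := by
                refine Finset.sum_le_sum fun k _ => ?_
                rw [abs_mul, abs_of_nonneg (hB_nonneg j k)]
                exact mul_le_mul_of_nonneg_left (hvM t htIcc k) (hB_nonneg j k)
            _ = (∑ k, B j k) * M := by rw [Finset.sum_mul]
            _ ≤ Bm * M := mul_le_mul_of_nonneg_right (hrowle j) hM0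
        have h2 : |∑ k, (B i k - B j k) * d t k| ≤ 2 * Bm * N * s := by
          calc |∑ k, (B i k - B j k) * d t k| ≤ ∑ k, |(B i k - B j k) * d t k| :=
                Finset.abs_sum_le_sum_abs _ _
            _ ≤ ∑ k : Fin N, 2 * Bm * s := by
                refine Finset.sum_le_sum fun k _ => ?_
                rw [abs_mul]
                refine mul_le_mul ?_ (hdle k) (abs_nonneg _) (by positivity)
                calc |B i k - B j k| ≤ |B i k| + |B j k| := abs_sub _ _
                  _ ≤ Bm + Bm := by
                      rw [abs_of_nonneg (hB_nonneg i k), abs_of_nonneg (hB_nonneg j k)]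
                      exact add_le_add (hBle i k) (hBle j k)
                  _ = 2 * Bm := by ring
            _ = N * (2 * Bm * s) := by simp [Finset.sum_const]
            _ = 2 * Bm * N * s := by ring
        calc |(-(δ i + ∑ k, B j k * v t k)) * d t i
              + (1 - v t i) * ∑ k, (B i k - B j k) * d t k|
            ≤ |(-(δ i + ∑ k, B j k * v t k)) * d t i|
              + |(1 - v t i) * ∑ k, (B i k - B j k) * d t k| := abs_add_le _ _
          _ ≤ (Dm + Bm * M) * s + (1 + M) * (2 * Bm * N * s) := by
              refine add_le_add ?_ ?_
              · rw [abs_mul, abs_neg]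
                refine mul_le_mul ?_ (hdle i) (abs_nonneg _) (by positivity)
                calc |δ i + ∑ k, B j k * v t k| ≤ |δ i| + |∑ k, B j k * v t k| := abs_add_le _ _
                  _ ≤ Dm + Bm * M := add_le_add
                      (by rw [abs_of_pos (hδ_pos i)]; exact hδle i) hSj
              · rw [abs_mul]
                refine mul_le_mul ?_ h2 (abs_nonneg _) (by positivity)
                calc |1 - v t i| ≤ |(1:ℝ)| + |v t i| := abs_sub _ _
                  _ ≤ 1 + M := by rw [abs_one]; exact add_le_add le_rfl (hvM t htIcc i)
          _ = L * s := by rw [hL]; ring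
      calc ‖∑ i, 2 * d t i * (F t i - F t (rep (c i)))‖
          ≤ ∑ i, |2 * d t i * (F t i - F t (rep (c i)))| := Finset.abs_sum_le_sum_abs _ _
        _ ≤ ∑ i : Fin N, 2 * s * (L * s) := by
            refine Finset.sum_le_sum fun i _ => ?_
            rw [abs_mul, abs_mul, abs_two]
            refine mul_le_mul (by
              exact mul_le_mul le_rfl (hdle i) (abs_nonneg _) (by norm_num))
              (hFd i) (abs_nonneg _) (by positivity)
        _ = N * (2 * s * (L * s)) := by simp [Finset.sum_const]
        _ = K * (f t) := by rw [hK, ← hss]; ring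
        _ = K * ‖f t‖ + 0 := by rw [Real.norm_eq_abs, abs_of_nonneg (hfnn t), add_zero]
    -- apply Gronwall
    have hfc : ContinuousOn f (Set.Icc 0 t₀) := by
      intro t ht
      exact ((hderiv t ht.1).continuousAt).continuousWithinAt
    have hfd : ∀ t ∈ Set.Ico (0:ℝ) t₀, HasDerivWithinAt f
        (∑ i, 2 * d t i * (F t i - F t (rep (c i)))) (Set.Ici t) t :=
      fun t ht => (hderiv t ht.1).hasDerivWithinAt
    have hf0 : ‖f 0‖ ≤ 0 := by
      have : f 0 = 0 := by
        refine Finset.sum_eq_zero fun i _ => ?_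
        have : v 0 i = v 0 (rep (c i)) := hinit i (rep (c i)) (hcrep i)
        simp [hd, this]
      simp [this]
    have := norm_le_gronwallBound_of_norm_deriv_right_le hfc hfd hf0 hbound t₀
      ⟨ht₀, le_rfl⟩
    rw [gronwallBound_ε0_δ0] at this
    have habs : |f t₀| ≤ 0 := this
    exact le_antisymm (by simpa [abs_of_nonneg (hfnn t₀)] using habs) (hfnn t₀)
  -- conclude
  intro t ht
  have hcard : ∀ i : Fin N,
      (0:ℝ) < Real.sqrt ((univ.filter (fun k => c k = c i)).card) := by
    intro i
    have : i ∈ univ.filter (fun k => c k = c i) := by simp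
    have hpos : 0 < (univ.filter (fun k => c k = c i)).card :=
      Finset.card_pos.2 ⟨i, this⟩
    exact Real.sqrt_pos.2 (by exact_mod_cast hpos)
  have hmain : ∀ i, v t i = ∑ l : Fin r,
      (Real.sqrt ((univ.filter (fun k => c k = l)).card) * v t (rep l))
        * indVec c l i := by
    intro i
    rw [Finset.sum_eq_single (c i)]
    · simp only [indVec, if_pos rfl]
      rw [key t ht i]
      field_simp
      rw [if_pos trivial, one_div,
        mul_inv_cancel_right₀ (hcard i).ne']
    · intro l _ hl
      simp [indVec, Ne.symm hl]
    · intro h; exact absurd (Finset.mem_univ _) h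
  refine ⟨hmain, ?_⟩
  have hveq : v t = ∑ l : Fin r,
      (Real.sqrt ((univ.filter (fun k => c k = l)).card) * v t (rep l)) • indVec c l := by
    funext i
    rw [hmain i]
    simp [Finset.sum_apply]
  rw [hveq]
  exact Submodule.sum_mem _ fun l _ => Submodule.smul_mem _ _
    (Submodule.subset_span (Set.mem_range_self l))
end

section
/- Suppose the N×N infection rate matrix B is symmetric and irreducible with nonnegative entries, the curing rate matrix S = diag(δ_1,...,δ_N) has positive diagonal, and V ⊆ ℝ^N is an m-dimensional linear subspace that is an invariant set of NIMFA and satisfies S v ∈ V for every v ∈ V. Then there exists an orthonormal basis x_1,...,x_N of ℝ^N consisting of eigenvectors of B such that V = span{x_1,...,x_m} and the orthogonal complement V⊥ = span{x_{m+1},...,x_N}; in particular B V ⊆ V and B V⊥ ⊆ V⊥. -/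
open Matrix Finset

/-- A nonnegative square matrix is irreducible if its associated directed graph
(with an edge from `i` to `j` whenever `B i j > 0`) is strongly connected. -/
def MatIrreducible {N : ℕ} (B : Matrix (Fin N) (Fin N) ℝ) : Prop :=
  ∀ i j : Fin N, Relation.ReflTransGen (fun a b => 0 < B a b) i j

/-- **Lemma 1.** If `B` is symmetric, irreducible and nonnegative, `S = diag(δ)`
has positive diagonal, and `V` is an `m`-dimensional invariant set of NIMFA with `S V ⊆ V`,
then there is an orthonormal basis `x_1,...,x_N` of eigenvectors of `B` such that
`V = span{x_1,...,x_m}` and `V⊥ = span{x_{m+1},...,x_N}`; in particular `B V ⊆ V` and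
`B V⊥ ⊆ V⊥`. -/
theorem nimfa_invariant_set_eigenvector_basis
    {N m : ℕ} (B : Matrix (Fin N) (Fin N) ℝ) (δ : Fin N → ℝ)
    (hB_symm : B.IsSymm)
    (hB_irr : MatIrreducible B)
    (hB_nonneg : ∀ i j, 0 ≤ B i j)
    (hδ_pos : ∀ i, 0 < δ i)
    (V : Submodule ℝ (Fin N → ℝ))
    (hdim : Module.finrank ℝ V = m)
    (hSV : ∀ v ∈ V, (fun i => δ i * v i) ∈ V)
    (hinv : ∀ v ∈ V, (fun i => -δ i * v i + (1 - v i) * ∑ j, B i j * v j) ∈ V) :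
    ∃ (x : Fin N → (Fin N → ℝ)) (μ : Fin N → ℝ),
      (∀ k l : Fin N, x k ⬝ᵥ x l = if k = l then 1 else 0) ∧
      (∀ k : Fin N, B.mulVec (x k) = μ k • x k) ∧
      V = Submodule.span ℝ (x '' {k : Fin N | (k : ℕ) < m}) ∧
      (∀ w : Fin N → ℝ,
        w ∈ Submodule.span ℝ (x '' {k : Fin N | m ≤ (k : ℕ)}) ↔ ∀ v ∈ V, w ⬝ᵥ v = 0) ∧
      (∀ v ∈ V, B.mulVec v ∈ V) ∧
      (∀ w : Fin N → ℝ, (∀ v ∈ V, w ⬝ᵥ v = 0) → ∀ v ∈ V, B.mulVec w ⬝ᵥ v = 0) := by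
  -- Step 1: B maps V into V
  have hBV : ∀ v ∈ V, B.mulVec v ∈ V := by
    intro v hv
    have h2v : (fun i => (2:ℝ) * v i) ∈ V := by
      have := V.smul_mem (2:ℝ) hv; simpa [Pi.smul_def, smul_eq_mul] using this
    have g1 := hinv v hv
    have g2 := hinv _ h2v
    have hc : (fun i => v i * ∑ j, B i j * v j) ∈ V := by
      have h := V.smul_mem (1/2 : ℝ) (V.sub_mem (V.smul_mem (2:ℝ) g1) g2)
      convert h using 1
      funext i
      simp only [Pi.smul_apply, Pi.sub_apply, smul_eq_mul]
      have hsum : ∑ j, B i j * (2 * v j) = 2 * ∑ j, B i j * v j := by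
        rw [Finset.mul_sum]; exact Finset.sum_congr rfl (fun j _ => by ring)
      rw [hsum]; ring
    have ha : (fun i => -δ i * v i + ∑ j, B i j * v j) ∈ V := by
      have h := V.add_mem g1 hc
      convert h using 1; funext i; simp only [Pi.add_apply]; ring
    have := V.add_mem ha (hSV v hv)
    convert this using 1
    funext i; simp only [Pi.add_apply, Matrix.mulVec, dotProduct]; ring
  -- Step 2: symmetry of the bilinear form
  have hdot : ∀ w v : Fin N → ℝ, B.mulVec w ⬝ᵥ v = w ⬝ᵥ B.mulVec v := by
    intro w v
    simp only [dotProduct, Matrix.mulVec, dotProduct, Finset.sum_mul, Finset.mul_sum]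
    rw [Finset.sum_comm]
    refine Finset.sum_congr rfl fun j _ => Finset.sum_congr rfl fun i _ => ?_
    rw [hB_symm.apply i j]
    ring
  have hmain : ∃ (x : Fin N → (Fin N → ℝ)) (μ : Fin N → ℝ),
      (∀ k l : Fin N, x k ⬝ᵥ x l = if k = l then 1 else 0) ∧
      (∀ k : Fin N, B.mulVec (x k) = μ k • x k) ∧
      V = Submodule.span ℝ (x '' {k : Fin N | (k : ℕ) < m}) ∧
      (∀ w : Fin N → ℝ,
        w ∈ Submodule.span ℝ (x '' {k : Fin N | m ≤ (k : ℕ)}) ↔ ∀ v ∈ V, w ⬝ᵥ v = 0) := by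
    have hmN : m ≤ N := by
      rw [← hdim]
      simpa using (Submodule.finrank_le V)
    let W : Submodule ℝ (EuclideanSpace ℝ (Fin N)) := V.comap (WithLp.linearEquiv 2 ℝ (Fin N → ℝ)).toLinearMap
    let T : EuclideanSpace ℝ (Fin N) →ₗ[ℝ] EuclideanSpace ℝ (Fin N) := Matrix.toEuclideanLin B
    have hHerm : B.IsHermitian := by
      rwa [Matrix.IsHermitian, Matrix.conjTranspose_eq_transpose_of_trivial]
    have hT : T.IsSymmetric := Matrix.isHermitian_iff_isSymmetric.mp hHerm
    have hTapp : ∀ v : EuclideanSpace ℝ (Fin N), T v = B.mulVec v := fun v => rfl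
    have hinner : ∀ a b : EuclideanSpace ℝ (Fin N), inner (𝕜 := ℝ) a b = a ⬝ᵥ b := by
      intro a b
      simp [PiLp.inner_apply, RCLike.inner_apply, dotProduct, mul_comm]
    have hTW : ∀ w ∈ W, T w ∈ W := fun w hw => hBV w hw
    have hTWperp : ∀ w ∈ Wᗮ, T w ∈ Wᗮ := by
      intro w hw
      rw [Submodule.mem_orthogonal] at hw ⊢
      intro u hu
      rw [← hT u w]
      exact hw _ (hTW u hu)
    have hT1 : (T.restrict hTW).IsSymmetric := hT.restrict_invariant hTW
    have hT2 : (T.restrict hTWperp).IsSymmetric := hT.restrict_invariant hTWperp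
    have hWV : W.map ((WithLp.linearEquiv 2 ℝ (Fin N → ℝ)) : EuclideanSpace ℝ (Fin N) →ₗ[ℝ] (Fin N → ℝ)) = V :=
      Submodule.map_comap_eq_of_surjective (WithLp.linearEquiv 2 ℝ (Fin N → ℝ)).surjective V
    have hdimW : Module.finrank ℝ W = m := by
      rw [← LinearEquiv.finrank_map_eq (WithLp.linearEquiv 2 ℝ (Fin N → ℝ)) W, hWV, hdim]
    have hdimWperp : Module.finrank ℝ Wᗮ = N - m := by
      have h := Submodule.finrank_add_finrank_orthogonal (K := W)
      have hEdim : Module.finrank ℝ (EuclideanSpace ℝ (Fin N)) = N := by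
        simp [finrank_euclideanSpace]
      omega
    let b₁ := hT1.eigenvectorBasis hdimW
    let b₂ := hT2.eigenvectorBasis hdimWperp
    let μ₁ := hT1.eigenvalues hdimW
    let μ₂ := hT2.eigenvalues hdimWperp
    have hsub : ∀ k : Fin N, ¬ (k : ℕ) < m → (k : ℕ) - m < N - m := by
      intro k hk; have := k.2; omega
    let x : Fin N → (Fin N → ℝ) := fun k =>
      if h : (k : ℕ) < m then (b₁ ⟨(k : ℕ), h⟩).val.ofLp
      else (b₂ ⟨(k : ℕ) - m, hsub k h⟩).val.ofLp
    let μ : Fin N → ℝ := fun k =>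
      if h : (k : ℕ) < m then μ₁ ⟨(k : ℕ), h⟩ else μ₂ ⟨(k : ℕ) - m, hsub k h⟩
    have hxW : ∀ (k : Fin N) (h : (k : ℕ) < m), x k = (b₁ ⟨(k : ℕ), h⟩).val.ofLp := by
      intro k h; simp only [x, dif_pos h]
    have hxWp : ∀ (k : Fin N) (h : ¬ (k : ℕ) < m),
        x k = (b₂ ⟨(k : ℕ) - m, hsub k h⟩).val.ofLp := by
      intro k h; simp only [x, dif_neg h]
    have hμW : ∀ (k : Fin N) (h : (k : ℕ) < m), μ k = μ₁ ⟨(k : ℕ), h⟩ := by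
      intro k h; simp only [μ, dif_pos h]
    have hμWp : ∀ (k : Fin N) (h : ¬ (k : ℕ) < m),
        μ k = μ₂ ⟨(k : ℕ) - m, hsub k h⟩ := by
      intro k h; simp only [μ, dif_neg h]
    -- span facts in the EuclideanSpace world
    have hW1 : Submodule.span ℝ (x '' {k : Fin N | (k : ℕ) < m}) = V := by
      have himg : x '' {k : Fin N | (k : ℕ) < m}
          = ⇑((WithLp.linearEquiv 2 ℝ (Fin N → ℝ)).toLinearMap ∘ₗ W.subtype) '' Set.range ⇑b₁.toBasis := by
        ext y
        simp only [Set.mem_image, Set.mem_setOf_eq, Set.mem_range, OrthonormalBasis.coe_toBasis]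
        constructor
        · rintro ⟨k, hk, rfl⟩
          exact ⟨b₁ ⟨(k : ℕ), hk⟩, ⟨_, rfl⟩, (hxW k hk).symm⟩
        · rintro ⟨z, ⟨i, rfl⟩, rfl⟩
          refine ⟨⟨(i : ℕ), lt_of_lt_of_le i.2 hmN⟩, i.2, ?_⟩
          rw [hxW _ i.2]
          exact congrArg (fun j => (b₁ j).val.ofLp) (Fin.ext rfl)
      rw [himg, Submodule.span_image, Module.Basis.span_eq, Submodule.map_top, LinearMap.range_comp,
        Submodule.range_subtype]
      exact hWV
    have hW2 : Submodule.span ℝ (x '' {k : Fin N | m ≤ (k : ℕ)}) = Wᗮ.map (WithLp.linearEquiv 2 ℝ (Fin N → ℝ)).toLinearMap := by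
      have himg : x '' {k : Fin N | m ≤ (k : ℕ)}
          = ⇑((WithLp.linearEquiv 2 ℝ (Fin N → ℝ)).toLinearMap ∘ₗ (Wᗮ).subtype) '' Set.range ⇑b₂.toBasis := by
        ext y
        simp only [Set.mem_image, Set.mem_setOf_eq, Set.mem_range, OrthonormalBasis.coe_toBasis]
        constructor
        · rintro ⟨k, hk, rfl⟩
          have hk' : ¬ (k : ℕ) < m := not_lt.mpr hk
          exact ⟨b₂ ⟨(k : ℕ) - m, hsub k hk'⟩, ⟨_, rfl⟩, (hxWp k hk').symm⟩
        · rintro ⟨z, ⟨i, rfl⟩, rfl⟩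
          have hlt : m + (i : ℕ) < N := by have := i.2; omega
          have h' : ¬ ((⟨m + (i : ℕ), hlt⟩ : Fin N) : ℕ) < m := by simp
          refine ⟨⟨m + (i : ℕ), hlt⟩, by simp, ?_⟩
          rw [hxWp _ h']
          exact congrArg (fun j => (b₂ j).val.ofLp) (Fin.ext (by simp))
      rw [himg, Submodule.span_image, Module.Basis.span_eq, Submodule.map_top, LinearMap.range_comp,
        Submodule.range_subtype]
    refine ⟨x, μ, ?_, ?_, ?_, ?_⟩
    · -- orthonormality
      intro k l
      have hb₁ := b₁.orthonormal
      have hb₂ := b₂.orthonormal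
      rw [orthonormal_iff_ite] at hb₁ hb₂
      by_cases hk : (k : ℕ) < m <;> by_cases hl : (l : ℕ) < m
      · rw [hxW k hk, hxW l hl, ← hinner, ← Submodule.coe_inner, hb₁]
        by_cases hkl : k = l
        · simp [hkl]
        · have h : (⟨(k : ℕ), hk⟩ : Fin m) ≠ ⟨(l : ℕ), hl⟩ := by
            intro h
            have h' : (k : ℕ) = (l : ℕ) := by simpa using h
            exact hkl (Fin.ext h')
          simp [h, hkl]
      · have hkl : k ≠ l := by rintro rfl; exact hl hk
        rw [hxW k hk, hxWp l hl, if_neg hkl, ← hinner]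
        have h2 := (b₂ ⟨(l : ℕ) - m, hsub l hl⟩).2
        rw [Submodule.mem_orthogonal] at h2
        exact h2 _ (b₁ ⟨(k : ℕ), hk⟩).2
      · have hkl : k ≠ l := by rintro rfl; exact hk hl
        rw [hxWp k hk, hxW l hl, if_neg hkl, ← hinner]
        have h2 := (b₂ ⟨(k : ℕ) - m, hsub k hk⟩).2
        rw [Submodule.mem_orthogonal] at h2
        rw [real_inner_comm]
        exact h2 _ (b₁ ⟨(l : ℕ), hl⟩).2
      · rw [hxWp k hk, hxWp l hl, ← hinner, ← Submodule.coe_inner, hb₂]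
        by_cases hkl : k = l
        · simp [hkl]
        · have h : (⟨(k : ℕ) - m, hsub k hk⟩ : Fin (N - m)) ≠ ⟨(l : ℕ) - m, hsub l hl⟩ := by
            intro h
            have := congrArg Fin.val h
            simp only at this
            exact hkl (Fin.ext (by omega))
          simp [h, hkl]
    · -- eigenvectors
      intro k
      by_cases hk : (k : ℕ) < m
      · rw [hxW k hk, hμW k hk, ← hTapp]
        have h2 := congrArg Subtype.val (hT1.apply_eigenvectorBasis hdimW ⟨(k : ℕ), hk⟩)
        rw [LinearMap.restrict_apply] at h2
        simp only [Submodule.coe_smul, RCLike.ofReal_real_eq_id, id_eq] at h2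
        exact congrArg WithLp.ofLp h2
      · rw [hxWp k hk, hμWp k hk, ← hTapp]
        have h2 := congrArg Subtype.val (hT2.apply_eigenvectorBasis hdimWperp ⟨(k : ℕ) - m, hsub k hk⟩)
        rw [LinearMap.restrict_apply] at h2
        simp only [Submodule.coe_smul, RCLike.ofReal_real_eq_id, id_eq] at h2
        exact congrArg WithLp.ofLp h2
    · exact hW1.symm
    · have key : ∀ w : EuclideanSpace ℝ (Fin N), w ∈ Wᗮ ↔ ∀ v ∈ V, w ⬝ᵥ v = 0 := by
        intro w
        rw [Submodule.mem_orthogonal]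
        constructor
        · intro hw v hv
          have := hw (WithLp.toLp 2 v) hv
          rw [hinner] at this
          rw [dotProduct_comm]
          exact this
        · intro h u hu
          rw [hinner, dotProduct_comm]
          exact h u.ofLp hu
      intro w
      rw [hW2, Submodule.mem_map_equiv]
      exact key _

  obtain ⟨x, μ, h1, h2, h3, h4⟩ := hmain
  refine ⟨x, μ, h1, h2, h3, h4, hBV, ?_⟩
  intro w hw v hv
  rw [hdot]
  exact hw _ (hBV v hv)
end

section
/- Suppose the N×N infection rate matrix B is symmetric and irreducible with nonnegative entries, S = diag(δ_1,...,δ_N) has positive diagonal, and V ⊆ ℝ^N is an m-dimensional invariant set of NIMFA with S v ∈ V for every v ∈ V. Let P_V and P_{V⊥} = I - P_V be the orthogonal projections onto V and its orthogonal complement V⊥. Then B decomposes as B = B_V + B_{V⊥} with B_V = P_V B P_V and B_{V⊥} = P_{V⊥} B P_{V⊥}; equivalently, writing orthonormal bases y_1,...,y_m of V and y_{m+1},...,y_N of V⊥, B = (y_1 ⋯ y_m) B̃_V (y_1 ⋯ y_m)ᵀ + (y_{m+1} ⋯ y_N) B̃_{V⊥} (y_{m+1} ⋯ y_N)ᵀ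 for some m×m matrix B̃_V and (N−m)×(N−m) matrix B̃_{V⊥}. -/
open Matrix Finset

set_option maxHeartbeats 1000000

/-- **Lemma 2, decomposition of the infection rate matrix.** If `B` is symmetric,
irreducible and nonnegative, `S = diag(δ)` has positive diagonal, and `V` is an `m`-dimensional
invariant set of NIMFA with `S V ⊆ V`, then, with `P` the orthogonal projection matrix onto `V`
(symmetric, idempotent, range `V`, fixing `V`), `B = P B P + (1 - P) B (1 - P)`; equivalently,
there are orthonormal bases `y_1,...,y_m` of `V` and `y_{m+1},...,y_N` of `V⊥` and matrices
`B̃_V`, `B̃_{V⊥}` such that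
`B = (y_1 ⋯ y_m) B̃_V (y_1 ⋯ y_m)ᵀ + (y_{m+1} ⋯ y_N) B̃_{V⊥} (y_{m+1} ⋯ y_N)ᵀ`. -/
theorem nimfa_infection_matrix_decomposition
    {N m : ℕ} (B : Matrix (Fin N) (Fin N) ℝ) (δ : Fin N → ℝ)
    (hB_symm : B.IsSymm)
    (hB_irr : MatIrreducible B)
    (hB_nonneg : ∀ i j, 0 ≤ B i j)
    (hδ_pos : ∀ i, 0 < δ i)
    (V : Submodule ℝ (Fin N → ℝ))
    (hdim : Module.finrank ℝ V = m)
    (hSV : ∀ v ∈ V, (fun i => δ i * v i) ∈ V)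
    (hinv : ∀ v ∈ V, (fun i => -δ i * v i + (1 - v i) * ∑ j, B i j * v j) ∈ V) :
    (∃ P : Matrix (Fin N) (Fin N) ℝ,
      P.IsSymm ∧ P * P = P ∧
      (∀ w : Fin N → ℝ, P.mulVec w ∈ V) ∧
      (∀ v ∈ V, P.mulVec v = v) ∧
      B = P * B * P + (1 - P) * B * (1 - P)) ∧
    (∃ (y : Fin N → (Fin N → ℝ)) (BtV BtVperp : Matrix (Fin N) (Fin N) ℝ),
      (∀ k l : Fin N, y k ⬝ᵥ y l = if k = l then 1 else 0) ∧
      V = Submodule.span ℝ (y '' {k : Fin N | (k : ℕ) < m}) ∧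
      (∀ w : Fin N → ℝ,
        w ∈ Submodule.span ℝ (y '' {k : Fin N | m ≤ (k : ℕ)}) ↔ ∀ v ∈ V, w ⬝ᵥ v = 0) ∧
      (∀ i j : Fin N, B i j =
        (∑ k ∈ univ.filter (fun k : Fin N => (k : ℕ) < m),
          ∑ l ∈ univ.filter (fun l : Fin N => (l : ℕ) < m), y k i * BtV k l * y l j) +
        (∑ k ∈ univ.filter (fun k : Fin N => m ≤ (k : ℕ)),
          ∑ l ∈ univ.filter (fun l : Fin N => m ≤ (l : ℕ)), y k i * BtVperp k l * y l j))) := by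
  classical
  -- Step 1: B maps V into V
  have hBV : ∀ v ∈ V, B *ᵥ v ∈ V := by
    intro v hv
    have h1 := hinv v hv
    have h2 : (fun i => -δ i * (2 * v i) + (1 - 2 * v i) * ∑ j, B i j * (2 * v j)) ∈ V := by
      simpa [Pi.smul_apply, smul_eq_mul] using hinv ((2:ℝ) • v) (V.smul_mem 2 hv)
    have hs := hSV v hv
    have key : B *ᵥ v =
        (2:ℝ) • (fun i => -δ i * v i + (1 - v i) * ∑ j, B i j * v j)
        - (2:ℝ)⁻¹ • (fun i => -δ i * (2 * v i) + (1 - 2 * v i) * ∑ j, B i j * (2 * v j))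
        + (fun i => δ i * v i) := by
      funext i
      have hsum : ∑ j, B i j * (2 * v j) = 2 * ∑ j, B i j * v j := by
        rw [Finset.mul_sum]; exact Finset.sum_congr rfl fun j _ => by ring
      simp only [Pi.add_apply, Pi.sub_apply, Pi.smul_apply, smul_eq_mul, hsum, mulVec,
        dotProduct]
      ring
    rw [key]
    exact V.add_mem (V.sub_mem (V.smul_mem _ h1) (V.smul_mem _ h2)) hs
  -- Step 2: B maps the dot-orthogonal complement of V to itself
  have hBperp : ∀ w : Fin N → ℝ, (∀ v ∈ V, w ⬝ᵥ v = 0) → ∀ v ∈ V, (B *ᵥ w) ⬝ᵥ v = 0 := by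
    intro w hw v hv
    have : (B *ᵥ w) ⬝ᵥ v = w ⬝ᵥ (B *ᵥ v) := by
      rw [dotProduct_comm, dotProduct_mulVec, ← mulVec_transpose, hB_symm.eq, dotProduct_comm]
    rw [this]
    exact hw _ (hBV v hv)
  -- Euclidean space setup
  set e : EuclideanSpace ℝ (Fin N) ≃ₗ[ℝ] (Fin N → ℝ) := WithLp.linearEquiv 2 ℝ (Fin N → ℝ)
    with he
  set W : Submodule ℝ (EuclideanSpace ℝ (Fin N)) := V.comap e.toLinearMap with hW
  have hmemW : ∀ x : EuclideanSpace ℝ (Fin N), x ∈ W ↔ e x ∈ V := fun x => Iff.rfl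
  have hdot : ∀ x y : EuclideanSpace ℝ (Fin N), (inner ℝ x y : ℝ) = (e x) ⬝ᵥ (e y) :=
    fun x y => by rw [EuclideanSpace.inner_eq_star_dotProduct, dotProduct_comm]; rfl
  have hWrank : Module.finrank ℝ W = m := by
    rw [hW, Submodule.comap_equiv_eq_map_symm, LinearEquiv.finrank_map_eq]
    exact hdim
  have hNrank : Module.finrank ℝ (EuclideanSpace ℝ (Fin N)) = N := finrank_euclideanSpace_fin
  have hWperp_rank : Module.finrank ℝ (Wᗮ : Submodule ℝ (EuclideanSpace ℝ (Fin N))) = N - m := by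
    have := Submodule.finrank_add_finrank_orthogonal (K := W)
    rw [hWrank, hNrank] at this
    omega
  have hmN : m ≤ N := by
    have := Submodule.finrank_le W
    rw [hWrank, hNrank] at this
    exact this
  -- Part 1: projection matrix
  have part1 : ∃ P : Matrix (Fin N) (Fin N) ℝ,
      P.IsSymm ∧ P * P = P ∧
      (∀ w : Fin N → ℝ, P.mulVec w ∈ V) ∧
      (∀ v ∈ V, P.mulVec v = v) ∧
      B = P * B * P + (1 - P) * B * (1 - P) := by
    set plin : (Fin N → ℝ) →ₗ[ℝ] (Fin N → ℝ) :=
      e.toLinearMap ∘ₗ (W.subtype ∘ₗ W.orthogonalProjectionOnto.toLinearMap) ∘ₗ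
        e.symm.toLinearMap with hplin
    set P : Matrix (Fin N) (Fin N) ℝ := LinearMap.toMatrix' plin with hP
    have hPapp : ∀ w : Fin N → ℝ,
        P *ᵥ w = e ((W.orthogonalProjectionOnto (e.symm w) : EuclideanSpace ℝ (Fin N))) := by
      intro w
      rw [hP, ← Matrix.toLin'_apply, Matrix.toLin'_toMatrix']
      rfl
    have hPmem : ∀ w : Fin N → ℝ, P *ᵥ w ∈ V := by
      intro w
      rw [hPapp]
      exact (hmemW _).mp (W.orthogonalProjectionOnto (e.symm w)).2
    have hPfix : ∀ v ∈ V, P *ᵥ v = v := by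
      intro v hv
      rw [hPapp]
      have hvW : e.symm v ∈ W := by rw [hmemW, e.apply_symm_apply]; exact hv
      have : W.orthogonalProjectionOnto (e.symm v) = ⟨e.symm v, hvW⟩ :=
        Submodule.orthogonalProjectionOnto_mem_subspace_eq_self ⟨e.symm v, hvW⟩
      rw [this]
      exact e.apply_symm_apply v
    have hPadj : ∀ u v : Fin N → ℝ, (P *ᵥ u) ⬝ᵥ v = u ⬝ᵥ (P *ᵥ v) := by
      intro u v
      rw [hPapp, hPapp]
      have h1 : (e ((W.orthogonalProjectionOnto (e.symm u) : EuclideanSpace ℝ (Fin N)))) ⬝ᵥ v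
          = (inner ℝ ((W.orthogonalProjectionOnto (e.symm u) : EuclideanSpace ℝ (Fin N))) (e.symm v) : ℝ) := by
        rw [hdot, e.apply_symm_apply]
      have h2 : u ⬝ᵥ (e ((W.orthogonalProjectionOnto (e.symm v) : EuclideanSpace ℝ (Fin N))))
          = (inner ℝ (e.symm u) ((W.orthogonalProjectionOnto (e.symm v) : EuclideanSpace ℝ (Fin N))) : ℝ) := by
        rw [hdot, e.apply_symm_apply]
      rw [h1, h2]
      exact Submodule.inner_starProjection_left_eq_right W _ _
    have hPsymm : P.IsSymm := by
      ext i j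
      have := hPadj (Pi.single j 1) (Pi.single i 1)
      rw [dotProduct_single, single_dotProduct, mulVec_single, mulVec_single] at this
      simpa [Matrix.transpose_apply] using this.symm
    have hPP : P * P = P := by
      rw [hP, ← LinearMap.toMatrix'_comp]
      congr 1
      apply LinearMap.ext
      intro w
      show plin (plin w) = plin w
      have h1 : plin w = e ((W.orthogonalProjectionOnto (e.symm w) : EuclideanSpace ℝ (Fin N))) := by
        rfl
      have h2 : plin (plin w)
          = e ((W.orthogonalProjectionOnto (e.symm (plin w)) : EuclideanSpace ℝ (Fin N))) := rfl
      rw [h2, h1, e.symm_apply_apply]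
      congr 1
      exact congrArg _ (Submodule.orthogonalProjectionOnto_mem_subspace_eq_self _)
    -- perpendicularity facts
    have hQperp : ∀ u : Fin N → ℝ, ∀ v ∈ V, (u - P *ᵥ u) ⬝ᵥ v = 0 := by
      intro u v hv
      have hmem : e.symm u - (W.orthogonalProjectionOnto (e.symm u) : EuclideanSpace ℝ (Fin N)) ∈ Wᗮ :=
        Submodule.sub_starProjection_mem_orthogonal (e.symm u)
      have hvW : e.symm v ∈ W := by rw [hmemW, e.apply_symm_apply]; exact hv
      have := Submodule.inner_left_of_mem_orthogonal hvW hmem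
      rw [hdot, map_sub, e.apply_symm_apply, e.apply_symm_apply, ← hPapp] at this
      exact this
    have hPBQ : P * B * (1 - P) = 0 := by
      ext i j
      have hcol : (P * B * (1 - P)) *ᵥ Pi.single j 1 = 0 := by
        rw [← mulVec_mulVec, ← mulVec_mulVec, sub_mulVec, one_mulVec]
        set q := Pi.single j (1:ℝ) - P *ᵥ Pi.single j 1 with hq
        have hq_perp : ∀ v ∈ V, q ⬝ᵥ v = 0 := hQperp _
        have hBq_perp : ∀ v ∈ V, (B *ᵥ q) ⬝ᵥ v = 0 := hBperp q hq_perp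
        have hBqW : e.symm (B *ᵥ q) ∈ Wᗮ := by
          rw [Submodule.mem_orthogonal]
          intro u hu
          rw [real_inner_comm, hdot, e.apply_symm_apply]
          exact hBq_perp _ ((hmemW u).mp hu)
        rw [hPapp, Submodule.orthogonalProjectionOnto_apply_of_mem_orthogonal hBqW]
        simp
      have := congrFun hcol i
      rw [mulVec_single] at this
      simpa using this
    have hQBP : (1 - P) * B * P = 0 := by
      ext i j
      have hcol : ((1 - P) * B * P) *ᵥ Pi.single j 1 = 0 := by
        rw [← mulVec_mulVec, ← mulVec_mulVec, sub_mulVec, one_mulVec]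
        have hmem : B *ᵥ (P *ᵥ Pi.single j 1) ∈ V := hBV _ (hPmem _)
        rw [hPfix _ hmem, sub_self]
      have := congrFun hcol i
      rw [mulVec_single] at this
      simpa using this
    refine ⟨P, hPsymm, hPP, hPmem, hPfix, ?_⟩
    have e1 : P * B * P = P * B := by
      have h := hPBQ
      rw [mul_sub, mul_one, sub_eq_zero] at h
      exact h.symm
    have e3 : (1 - P) * B * (1 - P) = B - P * B := by
      rw [mul_sub, mul_one, hQBP, sub_zero, sub_mul, one_mul]
    rw [e1, e3]
    abel
  refine ⟨part1, ?_⟩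
  -- Part 2: orthonormal bases
  set b1 : OrthonormalBasis (Fin m) ℝ W :=
    (stdOrthonormalBasis ℝ W).reindex (finCongr hWrank) with hb1
  set b2 : OrthonormalBasis (Fin (N - m)) ℝ (Wᗮ : Submodule ℝ (EuclideanSpace ℝ (Fin N))) :=
    (stdOrthonormalBasis ℝ (Wᗮ : Submodule ℝ (EuclideanSpace ℝ (Fin N)))).reindex
      (finCongr hWperp_rank) with hb2
  set z : Fin N → EuclideanSpace ℝ (Fin N) := fun k =>
    if h : (k : ℕ) < m then (b1 ⟨k, h⟩ : EuclideanSpace ℝ (Fin N))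
    else (b2 ⟨(k : ℕ) - m, by have := k.isLt; omega⟩ : EuclideanSpace ℝ (Fin N)) with hz
  set y : Fin N → (Fin N → ℝ) := fun k => e (z k) with hy
  have hzlt : ∀ (k : Fin N) (h : (k : ℕ) < m), z k = (b1 ⟨k, h⟩ : EuclideanSpace ℝ (Fin N)) :=
    fun k h => dif_pos h
  have hzge : ∀ (k : Fin N) (h : ¬ (k : ℕ) < m) (hb : (k : ℕ) - m < N - m),
      z k = (b2 ⟨(k : ℕ) - m, hb⟩ : EuclideanSpace ℝ (Fin N)) :=
    fun k h hb => dif_neg h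
  -- membership of z
  have hz_mem_lt : ∀ (k : Fin N), (k : ℕ) < m → z k ∈ W := by
    intro k h
    rw [hzlt k h]
    exact (b1 ⟨k, h⟩).2
  have hz_mem_ge : ∀ (k : Fin N), m ≤ (k : ℕ) → z k ∈ Wᗮ := by
    intro k h
    rw [hzge k (not_lt.mpr h) (by have := k.isLt; omega)]
    exact (b2 _).2
  -- orthonormality
  have hortho : ∀ k l : Fin N, y k ⬝ᵥ y l = if k = l then 1 else 0 := by
    intro k l
    rw [hy]
    rw [← hdot]
    by_cases hk : (k : ℕ) < m <;> by_cases hl : (l : ℕ) < m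
    · rw [hzlt k hk, hzlt l hl, ← Submodule.coe_inner,
        orthonormal_iff_ite.mp b1.orthonormal]
      simp [Fin.ext_iff]
    · rw [if_neg (by intro h; rw [h] at hk; exact hl hk)]
      exact Submodule.inner_right_of_mem_orthogonal (hz_mem_lt k hk)
        (hz_mem_ge l (not_lt.mp hl))
    · rw [if_neg (by intro h; rw [h] at hk; exact hk hl)]
      exact Submodule.inner_left_of_mem_orthogonal (hz_mem_lt l hl)
        (hz_mem_ge k (not_lt.mp hk))
    · rw [hzge k hk (by have := k.isLt; omega), hzge l hl (by have := l.isLt; omega),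
        ← Submodule.coe_inner, orthonormal_iff_ite.mp b2.orthonormal]
      have : ((⟨(k:ℕ) - m, by have := k.isLt; omega⟩ : Fin (N - m))
          = ⟨(l:ℕ) - m, by have := l.isLt; omega⟩) ↔ k = l := by
        rw [Fin.ext_iff, Fin.ext_iff]
        simp only []
        omega
      simp [this]
  -- generators
  have hy_mem_V : ∀ k : Fin N, (k : ℕ) < m → y k ∈ V := fun k h => (hmemW _).mp (hz_mem_lt k h)
  -- span of the first m vectors is V
  have hyc : ∀ i : Fin m, y (Fin.castLE hmN i) = e ((b1 i : EuclideanSpace ℝ (Fin N))) := by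
    intro i
    show e (z (Fin.castLE hmN i)) = _
    rw [hzlt (Fin.castLE hmN i) (by simpa using i.isLt)]
    rfl
  have hspanV : V = Submodule.span ℝ (y '' {k : Fin N | (k : ℕ) < m}) := by
    apply le_antisymm
    · intro v hv
      have hvW : e.symm v ∈ W := by rw [hmemW, e.apply_symm_apply]; exact hv
      have hrepr := b1.sum_repr ⟨e.symm v, hvW⟩
      have hv_eq : v = ∑ i : Fin m, b1.repr ⟨e.symm v, hvW⟩ i • y (Fin.castLE hmN i) := by
        calc v = e ((⟨e.symm v, hvW⟩ : W) : EuclideanSpace ℝ (Fin N)) :=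
              (e.apply_symm_apply v).symm
          _ = e ((∑ i : Fin m, b1.repr ⟨e.symm v, hvW⟩ i • b1 i : W) : EuclideanSpace ℝ (Fin N)) := by
              rw [hrepr]
          _ = ∑ i : Fin m, b1.repr ⟨e.symm v, hvW⟩ i • e ((b1 i : EuclideanSpace ℝ (Fin N))) := by
              rw [Submodule.coe_sum, map_sum]
              exact Finset.sum_congr rfl fun i _ => by
                rw [SetLike.val_smul, _root_.map_smul]
          _ = ∑ i : Fin m, b1.repr ⟨e.symm v, hvW⟩ i • y (Fin.castLE hmN i) := by
              exact Finset.sum_congr rfl fun i _ => by rw [hyc]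
      rw [hv_eq]
      exact Submodule.sum_mem _ fun i _ => Submodule.smul_mem _ _
        (Submodule.subset_span ⟨Fin.castLE hmN i, by simpa using i.isLt, rfl⟩)
    · rw [Submodule.span_le]
      rintro _ ⟨k, hk, rfl⟩
      exact hy_mem_V k hk
  -- the orthogonal complement description
  have hUmem : ∀ w : Fin N → ℝ, (e.symm w ∈ Wᗮ) ↔ ∀ v ∈ V, w ⬝ᵥ v = 0 := by
    intro w
    rw [Submodule.mem_orthogonal]
    constructor
    · intro h v hv
      have hvW : e.symm v ∈ W := by rw [hmemW, e.apply_symm_apply]; exact hv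
      have h2 := h _ hvW
      rw [hdot, e.apply_symm_apply, e.apply_symm_apply] at h2
      rw [dotProduct_comm]
      exact h2
    · intro h u hu
      rw [hdot, e.apply_symm_apply, dotProduct_comm]
      exact h _ ((hmemW u).mp hu)
  have hyc2 : ∀ i : Fin (N - m),
      y (⟨m + i, by have := i.isLt; omega⟩ : Fin N) = e ((b2 i : EuclideanSpace ℝ (Fin N))) := by
    intro i
    show e (z _) = _
    have hb : ((⟨m + i, by have := i.isLt; omega⟩ : Fin N) : ℕ) - m < N - m := by
      have := i.isLt; simp only []; omega
    rw [hzge _ (by simp only []; omega) hb]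
    have : (⟨((⟨m + i, by have := i.isLt; omega⟩ : Fin N) : ℕ) - m, hb⟩ : Fin (N - m)) = i :=
      Fin.ext (by simp)
    rw [this]
  have hspanperp : ∀ w : Fin N → ℝ,
      w ∈ Submodule.span ℝ (y '' {k : Fin N | m ≤ (k : ℕ)}) ↔ ∀ v ∈ V, w ⬝ᵥ v = 0 := by
    have hEq : Submodule.span ℝ (y '' {k : Fin N | m ≤ (k : ℕ)})
        = Wᗮ.map (e.toLinearMap) := by
      apply le_antisymm
      · rw [Submodule.span_le]
        rintro _ ⟨k, hk, rfl⟩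
        exact ⟨z k, hz_mem_ge k hk, rfl⟩
      · rintro x ⟨x', hx', rfl⟩
        have hrepr := b2.sum_repr ⟨x', hx'⟩
        have hx_eq : e x' = ∑ i : Fin (N - m),
            b2.repr ⟨x', hx'⟩ i • y (⟨m + i, by have := i.isLt; omega⟩ : Fin N) := by
          calc e x' = e (((⟨x', hx'⟩ : (Wᗮ : Submodule ℝ (EuclideanSpace ℝ (Fin N)))) :
                EuclideanSpace ℝ (Fin N))) := rfl
            _ = e (((∑ i : Fin (N - m), b2.repr ⟨x', hx'⟩ i • b2 i :
                (Wᗮ : Submodule ℝ (EuclideanSpace ℝ (Fin N)))) : EuclideanSpace ℝ (Fin N))) := by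
                rw [hrepr]
            _ = ∑ i : Fin (N - m), b2.repr ⟨x', hx'⟩ i • e ((b2 i : EuclideanSpace ℝ (Fin N))) := by
                rw [Submodule.coe_sum, map_sum]
                exact Finset.sum_congr rfl fun i _ => by rw [SetLike.val_smul, _root_.map_smul]
            _ = _ := Finset.sum_congr rfl fun i _ => by rw [hyc2]
        show e x' ∈ _
        rw [hx_eq]
        exact Submodule.sum_mem _ fun i _ => Submodule.smul_mem _ _
          (Submodule.subset_span ⟨_, by simp, rfl⟩)
    intro w
    rw [hEq, Submodule.mem_map_equiv]
    exact hUmem w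
  -- the matrix Y with rows y k
  set Y : Matrix (Fin N) (Fin N) ℝ := Matrix.of (fun k i => y k i) with hYdef
  have hYYt : Y * Yᵀ = 1 := by
    ext k l
    have h1 : (Y * Yᵀ) k l = y k ⬝ᵥ y l := by
      simp [Matrix.mul_apply, dotProduct, hYdef]
    rw [h1, hortho, Matrix.one_apply]
  have hYtY : Yᵀ * Y = 1 := mul_eq_one_comm.mp hYYt
  have hC : ∀ k l : Fin N, (Y * B * Yᵀ) k l = y k ⬝ᵥ (B *ᵥ y l) := by
    intro k l
    simp only [Matrix.mul_apply, Matrix.transpose_apply, hYdef, Matrix.of_apply, dotProduct,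
      mulVec, Finset.sum_mul, Finset.mul_sum]
    rw [Finset.sum_comm]
    exact Finset.sum_congr rfl fun a _ => Finset.sum_congr rfl fun b _ => by ring
  have hfull : ∀ i j : Fin N, B i j = ∑ k : Fin N, ∑ l : Fin N,
      y k i * (y k ⬝ᵥ (B *ᵥ y l)) * y l j := by
    intro i j
    have hB2 : B = Yᵀ * (Y * B * Yᵀ) * Y := by
      have h : Yᵀ * (Y * B * Yᵀ) * Y = (Yᵀ * Y) * B * (Yᵀ * Y) := by noncomm_ring
      rw [h, hYtY, one_mul, mul_one]
    conv_lhs => rw [hB2]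
    simp only [Matrix.mul_apply, Matrix.transpose_apply, hYdef, Matrix.of_apply,
      Finset.sum_mul]
    rw [Finset.sum_comm]
    refine Finset.sum_congr rfl fun k _ => Finset.sum_congr rfl fun l _ => ?_
    rw [← hC k l]
    rw [show (Y * B * Yᵀ) k l = ∑ x : Fin N, ∑ x1 : Fin N, y k x1 * B x1 x * y l x from by
      simp only [Matrix.mul_apply, Matrix.transpose_apply, hYdef, Matrix.of_apply,
        Finset.sum_mul]]
  -- cross terms vanish
  have hcross1 : ∀ k l : Fin N, (k : ℕ) < m → m ≤ (l : ℕ) → y k ⬝ᵥ (B *ᵥ y l) = 0 := by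
    intro k l hk hl
    have hp : ∀ v ∈ V, (y l) ⬝ᵥ v = 0 :=
      (hspanperp (y l)).mp (Submodule.subset_span ⟨l, hl, rfl⟩)
    have := hBperp (y l) hp (y k) (hy_mem_V k hk)
    rw [dotProduct_comm]
    exact this
  have hcross2 : ∀ k l : Fin N, m ≤ (k : ℕ) → (l : ℕ) < m → y k ⬝ᵥ (B *ᵥ y l) = 0 := by
    intro k l hk hl
    exact (hspanperp (y k)).mp (Submodule.subset_span ⟨k, hk, rfl⟩) _ (hBV _ (hy_mem_V l hl))
  -- splitting sums
  have hsplit : ∀ f : Fin N → ℝ, ∑ k : Fin N, f k =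
      ∑ k ∈ univ.filter (fun k : Fin N => (k : ℕ) < m), f k +
      ∑ k ∈ univ.filter (fun k : Fin N => m ≤ (k : ℕ)), f k := by
    intro f
    rw [← Finset.sum_filter_add_sum_filter_not univ (fun k : Fin N => (k : ℕ) < m) f]
    congr 1
    apply Finset.sum_congr _ fun _ _ => rfl
    apply Finset.filter_congr
    intro x _
    simp [not_lt]
  refine ⟨y, Matrix.of (fun k l => y k ⬝ᵥ (B *ᵥ y l)), Matrix.of (fun k l => y k ⬝ᵥ (B *ᵥ y l)),
    hortho, hspanV, hspanperp, ?_⟩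
  intro i j
  rw [hfull i j, hsplit (fun k => ∑ l : Fin N, y k i * (y k ⬝ᵥ (B *ᵥ y l)) * y l j)]
  congr 1
  · apply Finset.sum_congr rfl
    intro k hk
    have hkm : (k : ℕ) < m := (Finset.mem_filter.mp hk).2
    rw [hsplit (fun l => y k i * (y k ⬝ᵥ (B *ᵥ y l)) * y l j)]
    have hzero : ∑ l ∈ univ.filter (fun l : Fin N => m ≤ (l : ℕ)),
        y k i * (y k ⬝ᵥ (B *ᵥ y l)) * y l j = 0 := by
      apply Finset.sum_eq_zero
      intro l hl
      rw [hcross1 k l hkm (Finset.mem_filter.mp hl).2]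
      ring
    rw [hzero, add_zero]
    rfl
  · apply Finset.sum_congr rfl
    intro k hk
    have hkm : m ≤ (k : ℕ) := (Finset.mem_filter.mp hk).2
    rw [hsplit (fun l => y k i * (y k ⬝ᵥ (B *ᵥ y l)) * y l j)]
    have hzero : ∑ l ∈ univ.filter (fun l : Fin N => (l : ℕ) < m),
        y k i * (y k ⬝ᵥ (B *ᵥ y l)) * y l j = 0 := by
      apply Finset.sum_eq_zero
      intro l hl
      rw [hcross2 k l hkm (Finset.mem_filter.mp hl).2]
      ring
    rw [hzero, zero_add]
    rfl
end

section
/- Let B be a symmetric N×N infection rate matrix with a partition π = {N_1,...,N_r} such that β_ij = b_{pl} whenever i ∈ N_p and j ∈ N_l (block-constant infection rates, so π is equitable), suppose δ_i = δ_j whenever i,j lie in the same cell, and assume ker(B) equals the orthogonal complement of V_{≠0} := span{y_1,...,y_r}, where y_l are the normalized indicator vectors of π. Let v : [0,∞) → ℝ^N be any solution of NIMFA and let ṽ(t) = Σ_{l=1}^r (y_lᵀ v(t)) y_l be the orthogonal projection of v(t) onto V_{≠0}. Then the r×1 reduced-size projection ṽ^π(t), defined by ṽ^π_l(t) = y_lᵀ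 v(t)/√|N_l|, evolves autonomously (independently of the projection of v(t) onto ker(B)) according to dṽ^π(t)/dt = -S^π ṽ^π(t) + diag(u_r - ṽ^π(t)) B^π ṽ^π(t), where B^π is the quotient matrix, S^π = diag(δ_{i_1},...,δ_{i_r}) for representatives i_l ∈ N_l, and u_r is the r×1 all-one vector. -/
open Matrix Finset

lemma indVec_dot {N r : ℕ} (c : Fin N → Fin r) (l : Fin r) (w : Fin N → ℝ) :
    indVec c l ⬝ᵥ w
      = (∑ i ∈ univ.filter (fun k => c k = l), w i)
          / Real.sqrt ((univ.filter (fun k => c k = l)).card) := by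
  unfold indVec
  rw [dotProduct, Finset.sum_div]
  simp only [ite_mul, zero_mul]
  rw [← Finset.sum_filter]
  exact Finset.sum_congr rfl fun i hi => by ring

lemma indVec_dot_div {N r : ℕ} (c : Fin N → Fin r) (l : Fin r) (w : Fin N → ℝ) :
    (indVec c l ⬝ᵥ w) / Real.sqrt ((univ.filter (fun k => c k = l)).card)
      = (∑ i ∈ univ.filter (fun k => c k = l), w i)
          / ((univ.filter (fun k => c k = l)).card : ℝ) := by
  rw [indVec_dot, div_div, Real.mul_self_sqrt (by positivity)]

/-- **Theorem 3, first part: autonomous evolution of the cell averages.**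
For block-constant infection rates `β_ij = b_{c(i) c(j)}` (so the partition is equitable),
curing rates constant on cells, and `ker(B)` equal to the orthogonal complement of
`V_{≠0} = span{y_1,...,y_r}`, the reduced-size projection `ṽ^π_l(t) = y_lᵀ v(t)/√|N_l|`
of any NIMFA solution evolves autonomously according to the reduced NIMFA system with
the quotient matrix `B^π`. -/
theorem nimfa_projection_reduced_dynamics
    {N r : ℕ} (B : Matrix (Fin N) (Fin N) ℝ) (δ : Fin N → ℝ)
    (c : Fin N → Fin r) (rep : Fin r → Fin N)
    (hrep : ∀ l, c (rep l) = l)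
    (hB_symm : B.IsSymm)
    (hB_nonneg : ∀ i j, 0 ≤ B i j)
    (hδ_pos : ∀ i, 0 < δ i)
    (b : Fin r → Fin r → ℝ)
    (hblock : ∀ i j, B i j = b (c i) (c j))
    (hδ_cell : ∀ i j, c i = c j → δ i = δ j)
    (hker : ∀ w : Fin N → ℝ, B.mulVec w = 0 ↔ ∀ l : Fin r, indVec c l ⬝ᵥ w = 0)
    (v : ℝ → Fin N → ℝ)
    (hsol : ∀ t : ℝ, 0 ≤ t → ∀ i, HasDerivAt (fun s => v s i)
      (-δ i * v t i + (1 - v t i) * ∑ j, B i j * v t j) t) :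
    ∀ t : ℝ, 0 ≤ t → ∀ p : Fin r,
      HasDerivAt
        (fun s => (indVec c p ⬝ᵥ v s) /
          Real.sqrt ((Finset.univ.filter (fun k => c k = p)).card))
        (-δ (rep p) * ((indVec c p ⬝ᵥ v t) /
            Real.sqrt ((Finset.univ.filter (fun k => c k = p)).card))
          + (1 - (indVec c p ⬝ᵥ v t) /
            Real.sqrt ((Finset.univ.filter (fun k => c k = p)).card)) *
          ∑ l : Fin r,
            (∑ k ∈ univ.filter (fun k => c k = l), B (rep p) k) *
              ((indVec c l ⬝ᵥ v t) /
                Real.sqrt ((Finset.univ.filter (fun k => c k = l)).card))) t := by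
  intro t ht p
  have hne : ∀ l : Fin r, (univ.filter (fun k => c k = l)).Nonempty :=
    fun l => ⟨rep l, by simp [hrep l]⟩
  set C : Fin r → Finset (Fin N) := fun l => univ.filter (fun k => c k = l) with hC
  have hcard : ∀ l, (0:ℝ) < ((C l).card : ℝ) := fun l => by
    exact_mod_cast Finset.card_pos.mpr (hne l)
  set s : Fin r → ℝ := fun l => ∑ i ∈ C l, v t i with hs
  have hBsum : ∀ l, (∑ k ∈ C l, B (rep p) k) = b p l * ((C l).card : ℝ) := by
    intro l
    have : ∀ k ∈ C l, B (rep p) k = b p l := by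
      intro k hk
      have hk' : c k = l := by simpa [hC] using hk
      rw [hblock, hrep, hk']
    rw [Finset.sum_congr rfl this, Finset.sum_const, nsmul_eq_mul, mul_comm]
  have hpress : ∀ i, c i = p → (∑ j, B i j * v t j) = ∑ l, b p l * s l := by
    intro i hi
    rw [← Finset.sum_fiberwise univ c (fun j => B i j * v t j)]
    refine Finset.sum_congr rfl fun l _ => ?_
    rw [Finset.mul_sum]
    refine Finset.sum_congr rfl fun j hj => ?_
    have hj' : c j = l := (Finset.mem_filter.mp hj).2
    rw [hblock, hi, hj']
  have hderiv : HasDerivAt (fun u => (∑ i ∈ C p, v u i) / ((C p).card : ℝ))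
      ((-δ (rep p) * s p + (((C p).card : ℝ) - s p) * ∑ l, b p l * s l)
        / ((C p).card : ℝ)) t := by
    refine HasDerivAt.div_const ?_ _
    have h1 : HasDerivAt (fun u => ∑ i ∈ C p, v u i)
        (∑ i ∈ C p, (-δ i * v t i + (1 - v t i) * ∑ j, B i j * v t j)) t :=
      HasDerivAt.fun_sum (fun i _ => hsol t ht i)
    refine h1.congr_deriv ?_
    have h2 : ∀ i ∈ C p, (-δ i * v t i + (1 - v t i) * ∑ j, B i j * v t j)
        = -δ (rep p) * v t i + (1 - v t i) * ∑ l, b p l * s l := by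
      intro i hi
      have hci : c i = p := by simpa [hC] using hi
      rw [hpress i hci, hδ_cell (rep p) i (by rw [hrep, hci])]
    rw [Finset.sum_congr rfl h2, Finset.sum_add_distrib, ← Finset.sum_mul, ← Finset.mul_sum,
      Finset.sum_sub_distrib, Finset.sum_const, nsmul_eq_mul, mul_one]
  have key : ∀ l, (indVec c l ⬝ᵥ v t) / Real.sqrt ((C l).card) = s l / ((C l).card : ℝ) :=
    fun l => indVec_dot_div c l (v t)
  have keyf : (fun u => (indVec c p ⬝ᵥ v u) / Real.sqrt ((C p).card))
      = fun u => (∑ i ∈ C p, v u i) / ((C p).card : ℝ) := by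
    funext u
    exact indVec_dot_div c p (v u)
  rw [keyf]
  refine hderiv.congr_deriv ?_
  have key' : ∀ l, (indVec c l ⬝ᵥ v t) / Real.sqrt ((univ.filter (fun k => c k = l)).card)
      = s l / ((C l).card : ℝ) := key
  have hCsum : ∀ l, (∑ k ∈ univ.filter (fun k => c k = l), B (rep p) k)
      = ∑ k ∈ C l, B (rep p) k := fun l => rfl
  simp only [key', hCsum]
  have h3 : ∀ l ∈ (univ : Finset (Fin r)),
      (∑ k ∈ C l, B (rep p) k) * (s l / ((C l).card : ℝ)) = b p l * s l := by
    intro l _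
    have h0 : ((C l).card : ℝ) ≠ 0 := (hcard l).ne'
    rw [hBsum l]
    field_simp
  rw [Finset.sum_congr rfl h3]
  field_simp
end

section
/- Consider NIMFA on the complete graph: β_ij = β > 0 for all i,j = 1,...,N and δ_i = δ > 0 for all i, with βN > δ. Let v∞ = (1 - δ/(βN)) u, and let v(0) ∈ [0,1]^N satisfy 0 < v∞ᵀ v(0) < ‖v∞‖₂² and v_ker(0) := (I - (1/N) u uᵀ) v(0) ≠ 0. Then the solution of NIMFA with initial state v(0) is, for all t ≥ 0, v(t) = c₁(t) v∞ + c₂(t) v_ker(0), where, with the viral slope w = βN - δ, Φ = βN(1 - δ/(βN))/2 + δ, Υ₁(0) = arctanh(2 v∞ᵀ v(0)/‖v∞‖₂² - 1), and Υ₂(0) = (v_ker(0)ᵀ v(0)/‖v_ker(0)‖₂²) · cosh(Υ₁(0)): c₁(t) = (1/2)(1 + tanh((w/2) t + Υ₁(0))) and c₂(t) = Υ₂(0) e^{-Φ t} sech((w/2) t + Υ₁(0)). -/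
open Matrix Finset

/-- The inverse hyperbolic tangent, `arctanh x = (1/2) log((1+x)/(1-x))`. -/
noncomputable def arctanh (x : ℝ) : ℝ := (1 / 2) * Real.log ((1 + x) / (1 - x))

lemma tanh_arctanh {y : ℝ} (h1 : -1 < y) (h2 : y < 1) : Real.tanh (arctanh y) = y := by
  have h2' : (0:ℝ) < 1 - y := by linarith
  have hr : 0 < (1 + y) / (1 - y) := div_pos (by linarith) h2'
  set E := Real.exp (arctanh y) with hEdef
  have hEpos : 0 < E := Real.exp_pos _
  have hE : E * E = (1 + y) / (1 - y) := by
    rw [hEdef, ← Real.exp_add]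
    unfold arctanh
    rw [show 1 / 2 * Real.log ((1 + y) / (1 - y)) + 1 / 2 * Real.log ((1 + y) / (1 - y))
        = Real.log ((1 + y) / (1 - y)) by ring]
    exact Real.exp_log hr
  have hE2 : E * E * (1 - y) = 1 + y := by
    rw [hE]; field_simp
  rw [Real.tanh_eq_sinh_div_cosh, Real.sinh_eq, Real.cosh_eq, Real.exp_neg, ← hEdef]
  have hden : 0 < E + E⁻¹ := by positivity
  field_simp
  nlinarith [hE2, hEpos]

lemma myHasDerivAt_tanh (y : ℝ) : HasDerivAt Real.tanh (1 - Real.tanh y ^ 2) y := by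
  have h := (Real.hasDerivAt_sinh y).div (Real.hasDerivAt_cosh y) (Real.cosh_pos y).ne'
  have heq : Real.tanh = fun x => Real.sinh x / Real.cosh x :=
    funext fun x => Real.tanh_eq_sinh_div_cosh x
  rw [heq]
  convert h using 1
  any_goals rfl
  have hc := (Real.cosh_pos y).ne'
  have hp : Real.cosh y ^ 2 - Real.sinh y ^ 2 = 1 := Real.cosh_sq_sub_sinh_sq y
  field_simp

set_option maxHeartbeats 1000000 in
/-- **Theorem 4, closed-form solution of NIMFA on the complete graph.**
For the complete graph with homogeneous rates `β_ij = β > 0`, `δ_i = δ > 0` and `βN > δ`,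
any NIMFA solution with initial state `v(0) ∈ [0,1]^N` satisfying `0 < v∞ᵀv(0) < ‖v∞‖₂²`
and `v_ker(0) = (I - (1/N)uuᵀ)v(0) ≠ 0` equals
`v(t) = c₁(t) v∞ + c₂(t) v_ker(0)` with
`c₁(t) = (1/2)(1 + tanh((w/2)t + Υ₁(0)))` and
`c₂(t) = Υ₂(0) e^{-Φt} sech((w/2)t + Υ₁(0))`. -/
theorem nimfa_complete_graph_solution
    {N : ℕ} (hN : 1 ≤ N) (β δ : ℝ)
    (hβ : 0 < β) (hδ : 0 < δ) (hslope : δ < β * N)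
    (vinf : Fin N → ℝ) (hvinf : vinf = fun _ => 1 - δ / (β * N))
    (v0 : Fin N → ℝ) (hv0_lb : ∀ i, 0 ≤ v0 i) (hv0_ub : ∀ i, v0 i ≤ 1)
    (hdot_pos : 0 < vinf ⬝ᵥ v0) (hdot_lt : vinf ⬝ᵥ v0 < vinf ⬝ᵥ vinf)
    (vker0 : Fin N → ℝ) (hvker0 : vker0 = fun i => v0 i - (∑ j, v0 j) / N)
    (hvker0_ne : vker0 ≠ 0)
    (w Φ Υ₁ Υ₂ : ℝ)
    (hw : w = β * N - δ)
    (hΦ : Φ = β * N * (1 - δ / (β * N)) / 2 + δ)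
    (hΥ₁ : Υ₁ = arctanh (2 * (vinf ⬝ᵥ v0) / (vinf ⬝ᵥ vinf) - 1))
    (hΥ₂ : Υ₂ = (vker0 ⬝ᵥ v0 / (vker0 ⬝ᵥ vker0)) * Real.cosh Υ₁)
    (v : ℝ → Fin N → ℝ)
    (hsol : ∀ t : ℝ, 0 ≤ t → ∀ i, HasDerivAt (fun s => v s i)
      (-δ * v t i + (1 - v t i) * ∑ j, β * v t j) t)
    (hinit : v 0 = v0) :
    ∀ t : ℝ, 0 ≤ t → ∀ i,
      v t i = (1 / 2) * (1 + Real.tanh (w / 2 * t + Υ₁)) * vinf i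
        + (Υ₂ * Real.exp (-Φ * t) * (1 / Real.cosh (w / 2 * t + Υ₁))) * vker0 i := by
  have hNR : (0:ℝ) < (N:ℝ) := by exact_mod_cast Nat.pos_of_ne_zero (by omega)
  have hβN : (0:ℝ) < β * N := mul_pos hβ hNR
  set p : ℝ := 1 - δ / (β * N) with hp
  have hp0 : 0 < p := by
    rw [hp]
    have : δ / (β * N) < 1 := (div_lt_one hβN).mpr hslope
    linarith
  have hβNp : β * N * p = w := by
    rw [hw, hp]; field_simp
  have hΦ' : Φ = w / 2 + δ := by rw [hΦ, ← hβNp]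
  -- sums
  have hsum_vinf : ∑ j, vinf j = (N:ℝ) * p := by
    rw [hvinf]; simp [Finset.sum_const, mul_comm]
  have hsum_vker : ∑ j, vker0 j = 0 := by
    rw [hvker0]
    rw [Finset.sum_sub_distrib]
    simp [Finset.sum_const]
    field_simp
    simp
  set S0 : ℝ := ∑ j, v0 j with hS0
  have hdot1 : vinf ⬝ᵥ v0 = p * S0 := by
    simp only [dotProduct, hvinf, hS0, ← Finset.mul_sum]
  have hdot2 : vinf ⬝ᵥ vinf = p * ((N:ℝ) * p) := by
    simp only [dotProduct, hvinf]
    simp [Finset.sum_const, mul_comm, mul_assoc]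
    ring
  have hS0pos : 0 < S0 := by
    by_contra h
    push_neg at h
    nlinarith [hdot_pos, hdot1]
  have hS0lt : S0 < (N:ℝ) * p := by
    rw [hdot1, hdot2] at hdot_lt
    nlinarith
  -- the value y
  set y : ℝ := 2 * (vinf ⬝ᵥ v0) / (vinf ⬝ᵥ vinf) - 1 with hy
  have hyval : y = 2 * S0 / ((N:ℝ) * p) - 1 := by
    rw [hy, hdot1, hdot2]
    field_simp
  have hy1 : -1 < y := by
    rw [hyval]
    have : 0 < 2 * S0 / ((N:ℝ) * p) := by positivity
    linarith
  have hy2 : y < 1 := by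
    rw [hyval]
    have h2 : 2 * S0 / ((N:ℝ) * p) < 2 := by
      rw [div_lt_iff₀ (by positivity)]
      nlinarith
    linarith
  have htanhΥ₁ : Real.tanh Υ₁ = y := by
    rw [hΥ₁]; exact tanh_arctanh hy1 hy2
  have hcoshpos : ∀ z : ℝ, (0:ℝ) < Real.cosh z := Real.cosh_pos
  -- vker0 dot products
  have hker_dot : vker0 ⬝ᵥ v0 = vker0 ⬝ᵥ vker0 := by
    simp only [dotProduct]
    rw [← sub_eq_zero, ← Finset.sum_sub_distrib]
    have hc : ∀ i ∈ Finset.univ, vker0 i * v0 i - vker0 i * vker0 i = (S0 / N) * vker0 i := by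
      intro i _
      rw [hvker0]; simp only [← hS0]; ring
    rw [Finset.sum_congr rfl hc, ← Finset.mul_sum, hsum_vker, mul_zero]
  have hker_sq_pos : 0 < vker0 ⬝ᵥ vker0 := by
    obtain ⟨i, hi⟩ := Function.ne_iff.mp hvker0_ne
    simp only [dotProduct]
    apply Finset.sum_pos' (fun j _ => mul_self_nonneg _)
    exact ⟨i, Finset.mem_univ i, mul_self_pos.mpr hi⟩
  have hΥ₂val : Υ₂ = Real.cosh Υ₁ := by
    rw [hΥ₂, hker_dot, div_self hker_sq_pos.ne', one_mul]
  -- the candidate solution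
  set q : ℝ → ℝ := fun t => w / 2 * t + Υ₁ with hq
  set c₁ : ℝ → ℝ := fun t => 1 / 2 * (1 + Real.tanh (q t)) with hc₁
  set c₂ : ℝ → ℝ := fun t => Υ₂ * Real.exp (-Φ * t) * (1 / Real.cosh (q t)) with hc₂
  set g : ℝ → Fin N → ℝ := fun t i => c₁ t * vinf i + c₂ t * vker0 i with hgdef
  -- initial value
  have hq0 : q 0 = Υ₁ := by rw [hq]; simp
  have hg0 : g 0 = v0 := by
    funext i
    have hch : Real.cosh Υ₁ ≠ 0 := (hcoshpos Υ₁).ne'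
    simp only [hgdef, hc₁, hc₂, hq0, htanhΥ₁, hΥ₂val, hyval, hvinf, hvker0]
    simp only [mul_zero, neg_zero, Real.exp_zero, mul_one]
    field_simp
    ring
  -- derivative of the candidate
  set F : (Fin N → ℝ) → (Fin N → ℝ) := fun x i => -δ * x i + (1 - x i) * ∑ j, β * x j
    with hF
  have hgF : ∀ t : ℝ, HasDerivAt g (F (g t)) t := by
    intro t
    apply hasDerivAt_pi.mpr
    intro i
    have hq' : HasDerivAt q (w / 2) t := by
      rw [hq]
      simpa using ((hasDerivAt_id t).const_mul (w / 2)).add_const Υ₁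
    have htanh : HasDerivAt (fun s => Real.tanh (q s))
        ((1 - Real.tanh (q t) ^ 2) * (w / 2)) t :=
      (myHasDerivAt_tanh (q t)).comp t hq'
    have hc₁' : HasDerivAt c₁ (w / 4 * (1 - Real.tanh (q t) ^ 2)) t := by
      rw [hc₁]
      have h := (htanh.const_add 1).const_mul (1 / 2 : ℝ)
      convert h using 1
      any_goals rfl
      ring
    have hch : Real.cosh (q t) ≠ 0 := (hcoshpos (q t)).ne'
    have h1 : HasDerivAt (fun s : ℝ => -Φ * s) (-Φ) t := by
      simpa using (hasDerivAt_id t).const_mul (-Φ)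
    have h2 : HasDerivAt (fun s : ℝ => Υ₂ * Real.exp (-Φ * s))
        (Υ₂ * (Real.exp (-Φ * t) * -Φ)) t := h1.exp.const_mul Υ₂
    have h3 : HasDerivAt (fun s => Real.cosh (q s)) (Real.sinh (q t) * (w / 2)) t :=
      (Real.hasDerivAt_cosh (q t)).comp t hq'
    have h4 : HasDerivAt (fun s => (Real.cosh (q s))⁻¹)
        (-(Real.sinh (q t) * (w / 2)) / Real.cosh (q t) ^ 2) t := h3.inv hch
    have h5 := h2.mul h4
    have hc₂' : HasDerivAt c₂ (c₂ t * (-Φ - w / 2 * Real.tanh (q t))) t := by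
      rw [hc₂]
      simp only [one_div]
      convert h5 using 1
      any_goals rfl
      simp only [hc₂, Real.tanh_eq_sinh_div_cosh, one_div]
      field_simp
      ring
    have hd := (hc₁'.mul_const (vinf i)).add (hc₂'.mul_const (vker0 i))
    have hval : w / 4 * (1 - Real.tanh (q t) ^ 2) * vinf i
        + c₂ t * (-Φ - w / 2 * Real.tanh (q t)) * vker0 i = F (g t) i := by
      have hsumg : ∑ j, β * g t j = β * (c₁ t * ((N:ℝ) * p)) := by
        rw [← Finset.mul_sum]
        congr 1
        simp only [hgdef]
        rw [Finset.sum_add_distrib, ← Finset.mul_sum, ← Finset.mul_sum, hsum_vinf,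
          hsum_vker, mul_zero, add_zero]
      simp only [hF]
      rw [hsumg]
      simp only [hgdef, hc₁, hvinf]
      rw [hΦ', ← hβNp]
      simp only [hp]
      field_simp
      ring
    rw [← hval]
    simp only [hgdef]
    exact hd
  have hvF : ∀ t : ℝ, 0 ≤ t → HasDerivAt v (F (v t)) t := by
    intro t ht
    apply hasDerivAt_pi.mpr
    intro i
    simp only [hF]
    exact hsol t ht i
  -- uniqueness via Gronwall
  have key : ∀ b : ℝ, 0 < b → Set.EqOn v g (Set.Icc 0 b) := by
    intro b hb
    have hcv : ContinuousOn v (Set.Icc 0 b) := fun s hs =>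
      ((hvF s hs.1).continuousAt).continuousWithinAt
    have hcg : ContinuousOn g (Set.Icc 0 b) := fun s _ =>
      ((hgF s).continuousAt).continuousWithinAt
    obtain ⟨R1, hR1⟩ := isCompact_Icc.exists_bound_of_continuousOn hcv
    obtain ⟨R2, hR2⟩ := isCompact_Icc.exists_bound_of_continuousOn hcg
    set R : ℝ := max (max R1 R2) 0 with hR
    have hR0 : 0 ≤ R := le_max_right _ _
    set L : ℝ := δ + β * N * (1 + 2 * R) with hL
    have hL0 : 0 ≤ L := by positivity
    set K : NNReal := ⟨L, hL0⟩ with hK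
    have hLip : LipschitzOnWith K F (Metric.closedBall 0 R) := by
      apply LipschitzOnWith.of_dist_le_mul
      intro x hx y hy'
      have hxR : ‖x‖ ≤ R := by rwa [← mem_closedBall_zero_iff]
      have hyR : ‖y‖ ≤ R := by rwa [← mem_closedBall_zero_iff]
      have hxi : ∀ j, |x j| ≤ R := fun j => (norm_le_pi_norm x j).trans hxR
      have hyi : ∀ j, |y j| ≤ R := fun j => (norm_le_pi_norm y j).trans hyR
      have hKL : (K : ℝ) = L := rfl
      rw [hKL]
      set d : ℝ := dist x y with hd
      have hd0 : 0 ≤ d := dist_nonneg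
      apply (dist_pi_le_iff (by positivity)).mpr
      intro i
      have hdij : ∀ j, |x j - y j| ≤ d := fun j => by
        have := dist_le_pi_dist x y j
        rwa [Real.dist_eq] at this
      have hsum : |∑ j, x j - ∑ j, y j| ≤ (N:ℝ) * d := by
        rw [← Finset.sum_sub_distrib]
        calc |∑ j, (x j - y j)| ≤ ∑ j, |x j - y j| := Finset.abs_sum_le_sum_abs _ _
          _ ≤ ∑ _j : Fin N, d := Finset.sum_le_sum fun j _ => hdij j
          _ = (N:ℝ) * d := by simp [Finset.sum_const, mul_comm]
      have hsy : |∑ j, y j| ≤ (N:ℝ) * R := by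
        calc |∑ j, y j| ≤ ∑ j, |y j| := Finset.abs_sum_le_sum_abs _ _
          _ ≤ ∑ _j : Fin N, R := Finset.sum_le_sum fun j _ => hyi j
          _ = (N:ℝ) * R := by simp [Finset.sum_const, mul_comm]
      rw [Real.dist_eq]
      simp only [hF]
      have hrw : -δ * x i + (1 - x i) * ∑ j, β * x j
          - (-δ * y i + (1 - y i) * ∑ j, β * y j)
          = -δ * (x i - y i) + β * ((1 - x i) * ((∑ j, x j) - ∑ j, y j)
            + (∑ j, y j) * (y i - x i)) := by
        rw [← Finset.mul_sum, ← Finset.mul_sum]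
        ring
      rw [hrw]
      have h1xi : |1 - x i| ≤ 1 + R := by
        have := hxi i
        rw [abs_le] at this ⊢
        constructor <;> linarith
      calc |(-δ * (x i - y i)) + β * ((1 - x i) * ((∑ j, x j) - ∑ j, y j)
            + (∑ j, y j) * (y i - x i))|
          ≤ |(-δ) * (x i - y i)| + |β * ((1 - x i) * ((∑ j, x j) - ∑ j, y j)
            + (∑ j, y j) * (y i - x i))| := abs_add_le _ _
        _ ≤ δ * d + β * ((1 + R) * ((N:ℝ) * d) + ((N:ℝ) * R) * d) := by
            apply add_le_add
            · rw [abs_mul, abs_neg, abs_of_pos hδ]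
              exact mul_le_mul_of_nonneg_left (hdij i) hδ.le
            · rw [abs_mul, abs_of_pos hβ]
              apply mul_le_mul_of_nonneg_left _ hβ.le
              calc |(1 - x i) * ((∑ j, x j) - ∑ j, y j) + (∑ j, y j) * (y i - x i)|
                  ≤ |(1 - x i) * ((∑ j, x j) - ∑ j, y j)|
                    + |(∑ j, y j) * (y i - x i)| := abs_add_le _ _
                _ ≤ (1 + R) * ((N:ℝ) * d) + ((N:ℝ) * R) * d := by
                    apply add_le_add
                    · rw [abs_mul]
                      apply mul_le_mul h1xi hsum (abs_nonneg _) (by positivity)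
                    · rw [abs_mul]
                      have h := hdij i
                      rw [abs_sub_comm] at h
                      apply mul_le_mul hsy h (abs_nonneg _) (by positivity)
        _ ≤ L * d := le_of_eq (by rw [hL]; ring)
    have := ODE_solution_unique_of_mem_Icc_right
      (v := fun _ x => F x) (s := fun _ => Metric.closedBall (0 : Fin N → ℝ) R)
      (K := K) (f := v) (g := g) (a := 0) (b := b)
      (fun _ _ => hLip) hcv
      (fun t ht => (hvF t ht.1).hasDerivWithinAt)
      (fun t ht => mem_closedBall_zero_iff.mpr
        ((hR1 t (Set.Ico_subset_Icc_self ht)).trans ((le_max_left R1 R2).trans (le_max_left _ _))))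
      hcg
      (fun t _ => (hgF t).hasDerivWithinAt)
      (fun t ht => mem_closedBall_zero_iff.mpr
        ((hR2 t (Set.Ico_subset_Icc_self ht)).trans ((le_max_right R1 R2).trans (le_max_left _ _))))
      (by rw [hinit, hg0])
    exact this
  intro t ht i
  have hvg : v t = g t := key (t + 1) (by linarith) ⟨ht, by linarith⟩
  rw [congrFun hvg i]
end

section
/- Consider two NIMFA systems on N nodes with positive curing rates δ_i and δ̃_i, nonnegative infection rates β_ij and β̃_ij forming irreducible matrices B and B̃, and solutions v(t) and ṽ(t) with initial states v_i(0), ṽ_i(0) ∈ [0,1] for all nodes i. If δ̃_i ≤ δ_i and β̃_ij ≥ β_ij for all nodes i,j, then ṽ(0) ≥ v(0) componentwise implies ṽ(t) ≥ v(t) componentwise at every time t ≥ 0. -/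
open Matrix Finset

open Filter Topology

/-- First-touch / quasimonotone positivity lemma: if each component starts nonnegative
and whenever a component touches the level `-ε` (with all components `≥ -ε`) its
derivative is `> -C ε`, then all components stay nonnegative forever. -/
lemma first_touch {ι : Type*} [Fintype ι] (x f : ℝ → ι → ℝ) (C : ℝ) (hC : 0 < C)
    (hderiv : ∀ t : ℝ, 0 ≤ t → ∀ i, HasDerivAt (fun s => x s i) (f t i) t)
    (hx0 : ∀ i, 0 ≤ x 0 i)
    (hkey : ∀ t : ℝ, 0 ≤ t → ∀ ε : ℝ, 0 < ε → ε ≤ 1 → ∀ i,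
      x t i = -ε → (∀ j, -ε ≤ x t j) → -C * ε < f t i) :
    ∀ t : ℝ, 0 ≤ t → ∀ i, 0 ≤ x t i := by
  intro T hT i₀
  have hexpC : (0:ℝ) < Real.exp (2*C*T) := Real.exp_pos _
  have claim : ∀ ε : ℝ, 0 < ε → ε * Real.exp (2*C*T) ≤ 1 →
      ∀ t, 0 ≤ t → t ≤ T → ∀ i, -(ε * Real.exp (2*C*t)) < x t i := by
    intro ε hε hε1
    by_contra hcon
    push_neg at hcon
    obtain ⟨t₁, ht₁0, ht₁T, i₁, hi₁⟩ := hcon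
    set S : Set ℝ := {t | t ∈ Set.Icc (0:ℝ) T ∧ ∃ i, x t i + ε * Real.exp (2*C*t) ≤ 0}
      with hSdef
    have hSne : S.Nonempty := ⟨t₁, ⟨ht₁0, ht₁T⟩, i₁, by linarith⟩
    have hSbdd : BddBelow S := ⟨0, fun t ht => ht.1.1⟩
    have hScl : IsClosed S := by
      have hrw : S = ⋃ i : ι,
          (Set.Icc (0:ℝ) T ∩ (fun t => x t i + ε * Real.exp (2*C*t)) ⁻¹' Set.Iic 0) := by
        ext t
        simp only [hSdef, Set.mem_setOf_eq, Set.mem_iUnion, Set.mem_inter_iff,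
          Set.mem_preimage, Set.mem_Iic]
        constructor
        · rintro ⟨h1, i, h2⟩; exact ⟨i, h1, h2⟩
        · rintro ⟨i, h1, h2⟩; exact ⟨h1, i, h2⟩
      rw [hrw]
      refine isClosed_iUnion_of_finite fun i => ?_
      refine ContinuousOn.preimage_isClosed_of_isClosed ?_ isClosed_Icc isClosed_Iic
      intro t ht
      have h1 : ContinuousAt (fun s => x s i + ε * Real.exp (2*C*s)) t := by
        refine ((hderiv t ht.1 i).continuousAt).add ?_
        fun_prop
      exact h1.continuousWithinAt
    set τ := sInf S with hτdef
    have hτS : τ ∈ S := hScl.csInf_mem hSne hSbdd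
    obtain ⟨⟨hτ0, hτT⟩, i, hxi⟩ := hτS
    have hτpos : 0 < τ := by
      rcases hτ0.lt_or_eq with h | h
      · exact h
      · exfalso
        rw [← h] at hxi
        nlinarith [Real.exp_pos (2*C*(0:ℝ)), hx0 i]
    have hbefore : ∀ t, 0 ≤ t → t < τ → ∀ j, 0 < x t j + ε * Real.exp (2*C*t) := by
      intro t ht0 htτ j
      by_contra hc
      push_neg at hc
      have htS : t ∈ S := ⟨⟨ht0, le_trans htτ.le hτT⟩, j, hc⟩
      exact absurd (csInf_le hSbdd htS) (not_le.mpr htτ)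
    have hmemIoo : Set.Ioo (0:ℝ) τ ∈ 𝓝[<] τ :=
      Ioo_mem_nhdsLT_of_mem ⟨hτpos, le_refl τ⟩
    have hge : ∀ j, 0 ≤ x τ j + ε * Real.exp (2*C*τ) := by
      intro j
      have hcont : ContinuousAt (fun s => x s j + ε * Real.exp (2*C*s)) τ := by
        refine ((hderiv τ hτ0 j).continuousAt).add ?_
        fun_prop
      have htend : Tendsto (fun s => x s j + ε * Real.exp (2*C*s)) (𝓝[<] τ)
          (𝓝 (x τ j + ε * Real.exp (2*C*τ))) := hcont.continuousWithinAt
      refine ge_of_tendsto htend ?_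
      filter_upwards [hmemIoo] with t ht
      exact (hbefore t ht.1.le ht.2 j).le
    have hxeq : x τ i = -(ε * Real.exp (2*C*τ)) := by
      have := hge i; linarith
    set ε' := ε * Real.exp (2*C*τ) with hε'def
    have hε'pos : 0 < ε' := mul_pos hε (Real.exp_pos _)
    have hε'1 : ε' ≤ 1 := by
      have hle : Real.exp (2*C*τ) ≤ Real.exp (2*C*T) :=
        Real.exp_le_exp.mpr (by nlinarith)
      nlinarith [Real.exp_pos (2*C*τ)]
    have hkey' : -C * ε' < f τ i :=
      hkey τ hτ0 ε' hε'pos hε'1 i (by rw [hxeq]) (fun j => by have := hge j; linarith)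
    have hde : HasDerivAt (fun s => x s i + ε * Real.exp (2*C*s))
        (f τ i + ε * (Real.exp (2*C*τ) * (2*C))) τ := by
      refine (hderiv τ hτ0 i).add ?_
      have h1 : HasDerivAt (fun s : ℝ => 2*C*s) (2*C) τ := by
        simpa using (hasDerivAt_id τ).const_mul (2*C)
      exact h1.exp.const_mul ε
    have hdpos : 0 < f τ i + ε * (Real.exp (2*C*τ) * (2*C)) := by
      have heq : ε * (Real.exp (2*C*τ) * (2*C)) = 2*C*ε' := by rw [hε'def]; ring
      rw [heq]; nlinarith
    have hslope := hasDerivAt_iff_tendsto_slope.mp hde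
    have hev : ∀ᶠ t in 𝓝[≠] τ,
        0 < slope (fun s => x s i + ε * Real.exp (2*C*s)) τ t :=
      hslope (Ioi_mem_nhds hdpos)
    have hle : 𝓝[<] τ ≤ 𝓝[≠] τ :=
      nhdsWithin_mono τ (fun t ht => ne_of_lt ht)
    have hev2 : ∀ᶠ t in 𝓝[<] τ,
        (0 < slope (fun s => x s i + ε * Real.exp (2*C*s)) τ t) ∧ t ∈ Set.Ioo (0:ℝ) τ :=
      (hev.filter_mono hle).and (eventually_of_mem hmemIoo fun t ht => ht)
    obtain ⟨t, hslope_t, ht⟩ := hev2.exists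
    have hτval : x τ i + ε * Real.exp (2*C*τ) = 0 := by rw [hxeq]; ring
    have hpos := hbefore t ht.1.le ht.2 i
    rw [slope_def_field, hτval, sub_zero] at hslope_t
    have hden : t - τ < 0 := by linarith [ht.2]
    rcases div_pos_iff.mp hslope_t with ⟨hn, hd⟩ | ⟨hn, hd⟩
    · linarith
    · linarith
  by_contra hneg
  push_neg at hneg
  set ε := min (1 / Real.exp (2*C*T)) ((-x T i₀) / (2 * Real.exp (2*C*T))) with hεdef
  have hε_pos : 0 < ε := by
    apply lt_min
    · positivity
    · apply div_pos (by linarith) (by positivity)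
  have hε1 : ε * Real.exp (2*C*T) ≤ 1 := by
    calc ε * Real.exp (2*C*T) ≤ (1 / Real.exp (2*C*T)) * Real.exp (2*C*T) :=
          mul_le_mul_of_nonneg_right (min_le_left _ _) hexpC.le
      _ = 1 := by field_simp
  have hcl := claim ε hε_pos hε1 T hT (le_refl T) i₀
  have h3 : ε * Real.exp (2*C*T) ≤ (-x T i₀) / 2 := by
    calc ε * Real.exp (2*C*T) ≤ ((-x T i₀) / (2 * Real.exp (2*C*T))) * Real.exp (2*C*T) :=
          mul_le_mul_of_nonneg_right (min_le_right _ _) hexpC.le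
      _ = (-x T i₀) / 2 := by field_simp
  linarith

/-- Solutions of NIMFA with initial state in the box `[0,1]^N` stay in the box. -/
lemma nimfa_box_invariant {N : ℕ} (β : Matrix (Fin N) (Fin N) ℝ) (δ : Fin N → ℝ)
    (hδ_pos : ∀ i, 0 < δ i) (hβ_nonneg : ∀ i j, 0 ≤ β i j)
    (v : ℝ → Fin N → ℝ)
    (hsol : ∀ t : ℝ, 0 ≤ t → ∀ i, HasDerivAt (fun s => v s i)
      (-δ i * v t i + (1 - v t i) * ∑ j, β i j * v t j) t)
    (hinit01 : ∀ i, v 0 i ∈ Set.Icc (0 : ℝ) 1) :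
    ∀ t : ℝ, 0 ≤ t → ∀ i, v t i ∈ Set.Icc (0 : ℝ) 1 := by
  set B := ∑ i, ∑ j, β i j with hBdef
  have hB : 0 ≤ B := Finset.sum_nonneg fun i _ => Finset.sum_nonneg fun j _ => hβ_nonneg i j
  have hrow : ∀ i, ∑ j, β i j ≤ B := by
    intro i
    exact Finset.single_le_sum (f := fun i => ∑ j, β i j)
      (fun k _ => Finset.sum_nonneg fun j _ => hβ_nonneg k j) (Finset.mem_univ i)
  have hδsum : 0 ≤ ∑ i, δ i := Finset.sum_nonneg fun i _ => (hδ_pos i).le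
  set C := 1 + ∑ i, δ i + 2*B with hCdef
  have hC : 0 < C := by positivity
  have main := first_touch (ι := Fin N ⊕ Fin N)
    (fun t => Sum.elim (fun i => v t i) (fun i => 1 - v t i))
    (fun t => Sum.elim
      (fun i => -δ i * v t i + (1 - v t i) * ∑ j, β i j * v t j)
      (fun i => -(-δ i * v t i + (1 - v t i) * ∑ j, β i j * v t j)))
    C hC
    (by
      intro t ht i
      cases i with
      | inl i => exact hsol t ht i
      | inr i =>
        simpa using ((hsol t ht i).const_sub 1))
    (by
      intro i
      cases i with
      | inl i => exact (hinit01 i).1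
      | inr i => simpa using (hinit01 i).2)
    (by
      intro t ht ε hε hε1 i hxi hall
      have hlow : ∀ j, -ε ≤ v t j := fun j => hall (Sum.inl j)
      have hhigh : ∀ j, v t j ≤ 1 + ε := by
        intro j
        have := hall (Sum.inr j)
        simp only [Sum.elim_inr] at this
        linarith
      cases i with
      | inl i =>
        simp only [Sum.elim_inl] at hxi ⊢
        have hS : -(ε * B) ≤ ∑ j, β i j * v t j := by
          have h1 : ∀ j ∈ Finset.univ, -(ε * β i j) ≤ β i j * v t j := by
            intro j _
            have := hlow j
            nlinarith [hβ_nonneg i j]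
          calc -(ε * B) ≤ -(ε * ∑ j, β i j) := by nlinarith [hrow i]
            _ = ∑ j, -(ε * β i j) := by simp [Finset.mul_sum]
            _ ≤ ∑ j, β i j * v t j := Finset.sum_le_sum h1
        have hδi := hδ_pos i
        have hδle : δ i ≤ ∑ k, δ k :=
          Finset.single_le_sum (fun k _ => (hδ_pos k).le) (Finset.mem_univ i)
        rw [hxi]
        rw [hCdef]
        nlinarith [mul_nonneg hε.le hB]
      | inr i =>
        simp only [Sum.elim_inr] at hxi ⊢
        have hvi : v t i = 1 + ε := by linarith
        have hS : -(ε * B) ≤ ∑ j, β i j * v t j := by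
          have h1 : ∀ j ∈ Finset.univ, -(ε * β i j) ≤ β i j * v t j := by
            intro j _
            have := hlow j
            nlinarith [hβ_nonneg i j]
          calc -(ε * B) ≤ -(ε * ∑ j, β i j) := by nlinarith [hrow i]
            _ = ∑ j, -(ε * β i j) := by simp [Finset.mul_sum]
            _ ≤ ∑ j, β i j * v t j := Finset.sum_le_sum h1
        have hδi := hδ_pos i
        rw [hvi, hCdef]
        nlinarith [mul_nonneg hε.le hB])
  intro t ht i
  constructor
  · exact main t ht (Sum.inl i)
  · have := main t ht (Sum.inr i)
    simp only [Sum.elim_inr] at this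
    linarith

/-- **Theorem 5, monotonicity of NIMFA in the spreading rates.**
Consider two NIMFA systems with positive curing rates `δ_i`, `δ̃_i`, nonnegative irreducible
infection rate matrices `β`, `β̃`, and solutions `v(t)`, `ṽ(t)` with initial states in
`[0,1]`. If `δ̃_i ≤ δ_i` and `β̃_ij ≥ β_ij` for all `i,j`, then `ṽ(0) ≥ v(0)` implies
`ṽ(t) ≥ v(t)` at every time `t ≥ 0`. -/
theorem nimfa_monotone_comparison
    {N : ℕ} (β βt : Matrix (Fin N) (Fin N) ℝ) (δ δt : Fin N → ℝ)
    (hδ_pos : ∀ i, 0 < δ i) (hδt_pos : ∀ i, 0 < δt i)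
    (hβ_nonneg : ∀ i j, 0 ≤ β i j) (hβt_nonneg : ∀ i j, 0 ≤ βt i j)
    (hβ_irr : MatIrreducible β) (hβt_irr : MatIrreducible βt)
    (v vt : ℝ → Fin N → ℝ)
    (hsol : ∀ t : ℝ, 0 ≤ t → ∀ i, HasDerivAt (fun s => v s i)
      (-δ i * v t i + (1 - v t i) * ∑ j, β i j * v t j) t)
    (hsolt : ∀ t : ℝ, 0 ≤ t → ∀ i, HasDerivAt (fun s => vt s i)
      (-δt i * vt t i + (1 - vt t i) * ∑ j, βt i j * vt t j) t)
    (hinit01 : ∀ i, v 0 i ∈ Set.Icc (0 : ℝ) 1)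
    (hinitt01 : ∀ i, vt 0 i ∈ Set.Icc (0 : ℝ) 1)
    (hδ_le : ∀ i, δt i ≤ δ i)
    (hβ_ge : ∀ i j, β i j ≤ βt i j)
    (hinit_le : ∀ i, v 0 i ≤ vt 0 i) :
    ∀ t : ℝ, 0 ≤ t → ∀ i, v t i ≤ vt t i := by
  have hv01 := nimfa_box_invariant β δ hδ_pos hβ_nonneg v hsol hinit01
  have hvt01 := nimfa_box_invariant βt δt hδt_pos hβt_nonneg vt hsolt hinitt01
  set Bt := ∑ i, ∑ j, βt i j with hBtdef
  have hBt : 0 ≤ Bt := Finset.sum_nonneg fun i _ => Finset.sum_nonneg fun j _ => hβt_nonneg i j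
  have hrowt : ∀ i, ∑ j, βt i j ≤ Bt := by
    intro i
    exact Finset.single_le_sum (f := fun i => ∑ j, βt i j)
      (fun k _ => Finset.sum_nonneg fun j _ => hβt_nonneg k j) (Finset.mem_univ i)
  set C := 1 + Bt with hCdef
  have hC : 0 < C := by positivity
  have main := first_touch (ι := Fin N)
    (fun t i => vt t i - v t i)
    (fun t i => (-δt i * vt t i + (1 - vt t i) * ∑ j, βt i j * vt t j)
      - (-δ i * v t i + (1 - v t i) * ∑ j, β i j * v t j))
    C hC
    (fun t ht i => (hsolt t ht i).sub (hsol t ht i))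
    (fun i => by have := hinit_le i; simp; linarith)
    (by
      intro t ht ε hε hε1 i hxi hall
      have hxi' : vt t i - v t i = -ε := hxi
      have hall' : ∀ j, -ε ≤ vt t j - v t j := hall
      have hvi01 := hv01 t ht i
      have hvti01 := hvt01 t ht i
      set A1 := ∑ j, βt i j * vt t j with hA1
      set A2 := ∑ j, βt i j * v t j with hA2
      set A3 := ∑ j, β i j * v t j with hA3
      have hA12 : -(ε * Bt) ≤ A1 - A2 := by
        have h1 : ∀ j ∈ Finset.univ, -(ε * βt i j) ≤ βt i j * vt t j - βt i j * v t j := by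
          intro j _
          have hw := hall' j
          nlinarith [hβt_nonneg i j]
        calc -(ε * Bt) ≤ -(ε * ∑ j, βt i j) := by nlinarith [hrowt i]
          _ = ∑ j, -(ε * βt i j) := by simp [Finset.mul_sum]
          _ ≤ ∑ j, (βt i j * vt t j - βt i j * v t j) := Finset.sum_le_sum h1
          _ = A1 - A2 := by rw [Finset.sum_sub_distrib]
      have hA23 : A3 ≤ A2 := by
        apply Finset.sum_le_sum
        intro j _
        exact mul_le_mul_of_nonneg_right (hβ_ge i j) (hv01 t ht j).1
      have hA3nn : 0 ≤ A3 := Finset.sum_nonneg fun j _ =>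
        mul_nonneg (hβ_nonneg i j) (hv01 t ht j).1
      -- decomposition identity
      have hid : (-δt i * vt t i + (1 - vt t i) * A1) - (-δ i * v t i + (1 - v t i) * A3)
          = -δt i * (vt t i - v t i) + (δ i - δt i) * v t i
            + (1 - vt t i) * (A1 - A2) + (1 - vt t i) * (A2 - A3)
            + (v t i - vt t i) * A3 := by ring
      have hvtle : vt t i ≤ 1 := hvti01.2
      have hvtnn : 0 ≤ vt t i := hvti01.1
      have hvnn : 0 ≤ v t i := hvi01.1
      have hδl := hδ_le i
      have hδtp := hδt_pos i
      show -C * ε < (-δt i * vt t i + (1 - vt t i) * A1) - (-δ i * v t i + (1 - v t i) * A3)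
      rw [hid, hxi']
      have hp1 : 0 ≤ (1 - vt t i) * (A1 - A2 + ε * Bt) :=
        mul_nonneg (by linarith) (by linarith)
      have hp2 : 0 ≤ ε * Bt * vt t i := mul_nonneg (mul_nonneg hε.le hBt) hvtnn
      have hp3 : 0 ≤ (1 - vt t i) * (A2 - A3) := mul_nonneg (by linarith) (by linarith)
      have hp4 : 0 ≤ (δ i - δt i) * v t i := mul_nonneg (by linarith) hvnn
      have hp5 : 0 ≤ ε * A3 := mul_nonneg hε.le hA3nn
      rw [hCdef]
      nlinarith)
  intro t ht i
  have h : 0 ≤ vt t i - v t i := main t ht i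
  linarith
end

section
/- Suppose δ_i > 0 and β_ij ≥ 0 for all i,j, and B is symmetric and irreducible. Let π = {N_1,...,N_r} be any partition of the node set {1,...,N}, and define d_min,pl = min_{i∈N_p} Σ_{k∈N_l} β_ik, d_max,pl = max_{i∈N_p} Σ_{k∈N_l} β_ik, δ_min,l = min_{i∈N_l} δ_i and δ_max,l = max_{i∈N_l} δ_i, with r×r matrices B_min = (d_min,pl) and B_max = (d_max,pl). Let v_lb, v_ub : [0,∞) → ℝ^r solve d v_lb(t)/dt = -diag(δ_max,1,...,δ_max,r) v_lb(t) + diag(u_r - v_lb(t)) B_min v_lb(t) and d v_ub(t)/dt = -diag(δ_min,1,...,δ_min,r) v_ub(t) + diag(u_r - v_ub(t)) B_max v_ub(t), with initial conditions v_lb,l(0), v_ub,l(0) ∈ [0,1], and let v : [0,∞) → ℝ^N solve NIMFA with v(0) ∈ [0,1]^N. If v_lb,l(0) ≤ v_i(0) ≤ v_ub,l(0) for all nodes i in every cell N_l, then v_lb,l(t) ≤ v_i(t) ≤ v_ub,l(t) for all t ≥ 0, all cells N_l and all nodes i ∈ N_l. -/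
open Matrix Finset

section NimfaAux

open Filter Set Topology

lemma continuousOn_finset_sup' {ι : Type*} (s : Finset ι) (hs : s.Nonempty)
    (g : ι → ℝ → ℝ) {t : Set ℝ} (hg : ∀ j ∈ s, ContinuousOn (g j) t) :
    ContinuousOn (fun x => s.sup' hs fun j => g j x) t := by
  induction s using Finset.cons_induction with
  | empty => exact absurd hs (by simp)
  | cons a s ha ih =>
    rcases s.eq_empty_or_nonempty with rfl | hsne
    · have : (fun x => (Finset.cons a ∅ ha).sup' hs fun j => g j x) = g a := by
        funext x; simp
      rw [this]; exact hg a (by simp)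
    · have : (fun x => (Finset.cons a s ha).sup' hs fun j => g j x)
          = fun x => max (g a x) (s.sup' hsne fun j => g j x) := by
        funext x; rw [Finset.sup'_cons hsne]
      rw [this]
      exact (hg a (by simp)).sup' (ih hsne (fun j hj => hg j (by simp [hj])))

lemma eventually_max_slope {ι : Type*} [Fintype ι] [Nonempty ι]
    (g : ι → ℝ → ℝ) (g' : ι → ℝ) (x R : ℝ)
    (hd : ∀ j, HasDerivAt (g j) (g' j) x)
    (hR : ∀ j, g j x = univ.sup' univ_nonempty (fun k => g k x) → g' j < R) :
    ∀ᶠ z in 𝓝[>] x, (z - x)⁻¹ *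
      ((univ.sup' univ_nonempty fun k => g k z) - univ.sup' univ_nonempty (fun k => g k x)) < R := by
  set F : ℝ → ℝ := fun s => univ.sup' univ_nonempty fun k => g k s with hF
  have hall : ∀ j : ι, ∀ᶠ z in 𝓝[>] x, g j z < F x + R * (z - x) := by
    intro j
    rcases eq_or_lt_of_le (Finset.le_sup' (fun k => g k x) (Finset.mem_univ j)) with h | h
    · have hr' : g' j < R := hR j h
      have hs : Tendsto (slope (g j) x) (𝓝[≠] x) (𝓝 (g' j)) :=
        hasDerivAt_iff_tendsto_slope.mp (hd j)
      have h2 : ∀ᶠ z in 𝓝[≠] x, slope (g j) x z < R := hs.eventually_lt_const hr'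
      have h3 : ∀ᶠ z in 𝓝[>] x, slope (g j) x z < R :=
        h2.filter_mono (nhdsWithin_mono x fun z hz => ne_of_gt hz)
      filter_upwards [h3, self_mem_nhdsWithin] with z hz hz'
      have hzx : (0:ℝ) < z - x := sub_pos.2 hz'
      have hsl : slope (g j) x z = (g j z - g j x) / (z - x) := by
        rw [slope_def_field]
      rw [hsl, div_lt_iff₀ hzx] at hz
      have : g j x = F x := h
      linarith
    · have hc : ContinuousAt (g j) x := (hd j).continuousAt
      have ht : Tendsto (fun z => g j z - R * (z - x)) (𝓝 x) (𝓝 (g j x)) := by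
        have h1 : Tendsto (fun z => R * (z - x)) (𝓝 x) (𝓝 (R * (x - x))) :=
          (tendsto_id.sub_const x).const_mul R
        simpa using hc.tendsto.sub h1
      have h4 : ∀ᶠ z in 𝓝 x, g j z - R * (z - x) < F x := ht.eventually_lt_const h
      filter_upwards [nhdsWithin_le_nhds h4] with z hz
      linarith
  have hA := Filter.eventually_all.2 hall
  filter_upwards [hA, self_mem_nhdsWithin] with z hz hz'
  have hzx : (0:ℝ) < z - x := sub_pos.2 hz'
  have hFz : F z < F x + R * (z - x) := by
    rw [hF]
    exact (Finset.sup'_lt_iff univ_nonempty).mpr fun k _ => hz k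
  rw [inv_mul_lt_iff₀ hzx]
  nlinarith

lemma gronwall_sup'_nonpos {ι : Type*} [Fintype ι] [Nonempty ι]
    (g g' : ι → ℝ → ℝ) (K T : ℝ)
    (hd : ∀ j, ∀ x ∈ Set.Icc (0:ℝ) T, HasDerivAt (g j) (g' j x) x)
    (hb : ∀ x ∈ Set.Ico (0:ℝ) T, ∀ j, g j x = univ.sup' univ_nonempty (fun k => g k x) →
       g' j x ≤ K * univ.sup' univ_nonempty (fun k => g k x))
    (h0 : univ.sup' univ_nonempty (fun k => g k 0) ≤ 0) :
    ∀ x ∈ Set.Icc (0:ℝ) T, univ.sup' univ_nonempty (fun k => g k x) ≤ 0 := by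
  set F : ℝ → ℝ := fun s => univ.sup' univ_nonempty fun k => g k s with hF
  have hcont : ContinuousOn F (Set.Icc 0 T) :=
    continuousOn_finset_sup' univ univ_nonempty g
      (fun j _ => fun x hx => ((hd j x hx).continuousAt).continuousWithinAt)
  have hmain := le_gronwallBound_of_liminf_deriv_right_le (f := F) (f' := fun x => K * F x)
    (δ := 0) (K := K) (ε := 0) (a := 0) (b := T) hcont ?_ h0 ?_
  · intro x hx
    have h2 : F x ≤ 0 := by simpa [gronwallBound_ε0_δ0] using hmain x hx
    exact h2
  · intro x hx R hR
    have hev := eventually_max_slope g (fun j => g' j x) x R (fun j => hd j x (Set.mem_Icc_of_Ico hx))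
      (fun j hj => lt_of_le_of_lt (hb x hx j hj) hR)
    exact hev.frequently
  · intro x hx
    simp

lemma nimfa_est_neg {d S m A C D : ℝ} (hd : 0 ≤ d) (hm : 0 ≤ m) (hmC : m ≤ C) (hA : 0 ≤ A)
    (hD : 0 ≤ D) (hS : -(m * A) ≤ S) :
    d * (-m) - (1 - -m) * S ≤ (D + 4 * A * (1 + C)) * m := by
  nlinarith [mul_nonneg (by linarith : (0:ℝ) ≤ 1 + m) (by linarith : (0:ℝ) ≤ S + m * A),
    mul_nonneg hd hm, mul_nonneg (mul_nonneg hA hm) (by linarith : (0:ℝ) ≤ C - m),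
    mul_nonneg (mul_nonneg hA hm) (le_trans hm hmC), mul_nonneg hD hm,
    mul_nonneg (mul_nonneg hA hm) hm]

lemma nimfa_est_one {d S m A C D : ℝ} (hd : 0 ≤ d) (hm : 0 ≤ m) (hmC : m ≤ C) (hA : 0 ≤ A)
    (hD : 0 ≤ D) (hS : -(m * A) ≤ S) :
    -d * (1 + m) + (1 - (1 + m)) * S ≤ (D + 4 * A * (1 + C)) * m := by
  nlinarith [mul_nonneg hm (by linarith : (0:ℝ) ≤ S + m * A),
    mul_nonneg hd (by linarith : (0:ℝ) ≤ 1 + m),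
    mul_nonneg (mul_nonneg hA hm) (by linarith : (0:ℝ) ≤ C - m),
    mul_nonneg hD hm, mul_nonneg (mul_nonneg hA hm) (le_trans hm hmC)]

lemma nimfa_est_pair {a b X Y P Q m A C D : ℝ}
    (hm : 0 ≤ m) (hmC : m ≤ C) (hA : 0 ≤ A)
    (hb : 0 ≤ b) (hba : b ≤ a) (haD : a ≤ D)
    (hX : X = Y + m) (hY1 : -m ≤ Y) (hY2 : Y ≤ 1 + m)
    (hPQ : P - Q ≤ m * A) (hP : -(A * (1 + C)) ≤ P) (hQ : Q ≤ A * (1 + C)) :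
    (-a * X + (1 - X) * P) - (-b * Y + (1 - Y) * Q) ≤ (D + 4 * A * (1 + C)) * m := by
  subst hX
  have hC0 : 0 ≤ C := le_trans hm hmC
  have ha0 : 0 ≤ a := le_trans hb hba
  rcases le_or_gt 0 (P - Q) with h | h
  · nlinarith [mul_nonneg (by linarith : (0:ℝ) ≤ Y + m) h,
      mul_nonneg (by linarith : (0:ℝ) ≤ 1 + m) (by linarith : (0:ℝ) ≤ m * A - (P - Q)),
      mul_nonneg hm (by linarith : (0:ℝ) ≤ P + A * (1 + C)),
      mul_nonneg (by linarith : (0:ℝ) ≤ a - b) (by linarith : (0:ℝ) ≤ Y + m),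
      mul_nonneg (mul_nonneg hA hm) (by linarith : (0:ℝ) ≤ C - m),
      mul_nonneg ha0 hm, mul_nonneg (mul_nonneg hA hm) (le_trans hm hmC)]
  · nlinarith [mul_nonneg (by linarith : (0:ℝ) ≤ 1 + m - Y) (by linarith : (0:ℝ) ≤ Q - P),
      mul_nonneg hm (by linarith : (0:ℝ) ≤ Q - P),
      mul_nonneg hm (by linarith : (0:ℝ) ≤ P + A * (1 + C)),
      mul_nonneg hm (by linarith : (0:ℝ) ≤ A * (1 + C) - Q),
      mul_nonneg (by linarith : (0:ℝ) ≤ a - b) (by linarith : (0:ℝ) ≤ Y + m),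
      mul_nonneg ha0 hm, mul_nonneg (mul_nonneg hA hm) (le_trans hm hmC),
      mul_nonneg (mul_nonneg hA hm) (by linarith : (0:ℝ) ≤ C - m)]

lemma nimfa_fiber_mul_sum {N r : ℕ} (c : Fin N → Fin r) (b : Fin N → ℝ) (u : Fin r → ℝ) :
    ∑ j, b j * u (c j) = ∑ l, (∑ j ∈ univ.filter (fun j => c j = l), b j) * u l := by
  rw [← Finset.sum_fiberwise univ c (fun j => b j * u (c j))]
  refine Finset.sum_congr rfl fun l _ => ?_
  rw [Finset.sum_mul]
  refine Finset.sum_congr rfl fun j hj => ?_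
  rw [(Finset.mem_filter.mp hj).2]

end NimfaAux

/-- Index type for the family of comparison functions. -/
abbrev NimfaIdx (N r : ℕ) :=
  Option ((Fin N ⊕ Fin N ⊕ Fin N ⊕ Fin N) ⊕ (Fin r ⊕ Fin r ⊕ Fin r ⊕ Fin r))

/-- The family of functions whose maximum must stay nonpositive. -/
def nimfaComp {N r : ℕ} (c : Fin N → Fin r) (v : ℝ → Fin N → ℝ) (vlb vub : ℝ → Fin r → ℝ) :
    NimfaIdx N r → ℝ → ℝ
  | none, _ => 0
  | some (Sum.inl (Sum.inl i)), t => -v t i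
  | some (Sum.inl (Sum.inr (Sum.inl i))), t => v t i - 1
  | some (Sum.inl (Sum.inr (Sum.inr (Sum.inl i)))), t => vlb t (c i) - v t i
  | some (Sum.inl (Sum.inr (Sum.inr (Sum.inr i)))), t => v t i - vub t (c i)
  | some (Sum.inr (Sum.inl p)), t => -vlb t p
  | some (Sum.inr (Sum.inr (Sum.inl p))), t => vlb t p - 1
  | some (Sum.inr (Sum.inr (Sum.inr (Sum.inl p)))), t => -vub t p
  | some (Sum.inr (Sum.inr (Sum.inr (Sum.inr p)))), t => vub t p - 1

/-- The derivatives of the comparison functions. -/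
def nimfaCompD {N r : ℕ} (B : Matrix (Fin N) (Fin N) ℝ) (δ : Fin N → ℝ)
    (c : Fin N → Fin r) (dmin dmax : Fin r → Fin r → ℝ) (δmin δmax : Fin r → ℝ)
    (v : ℝ → Fin N → ℝ) (vlb vub : ℝ → Fin r → ℝ) : NimfaIdx N r → ℝ → ℝ
  | none, _ => 0
  | some (Sum.inl (Sum.inl i)), t =>
      -(-δ i * v t i + (1 - v t i) * ∑ j, B i j * v t j)
  | some (Sum.inl (Sum.inr (Sum.inl i))), t =>
      -δ i * v t i + (1 - v t i) * ∑ j, B i j * v t j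
  | some (Sum.inl (Sum.inr (Sum.inr (Sum.inl i)))), t =>
      (-δmax (c i) * vlb t (c i) + (1 - vlb t (c i)) * ∑ l, dmin (c i) l * vlb t l)
        - (-δ i * v t i + (1 - v t i) * ∑ j, B i j * v t j)
  | some (Sum.inl (Sum.inr (Sum.inr (Sum.inr i)))), t =>
      (-δ i * v t i + (1 - v t i) * ∑ j, B i j * v t j)
        - (-δmin (c i) * vub t (c i) + (1 - vub t (c i)) * ∑ l, dmax (c i) l * vub t l)
  | some (Sum.inr (Sum.inl p)), t =>
      -(-δmax p * vlb t p + (1 - vlb t p) * ∑ l, dmin p l * vlb t l)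
  | some (Sum.inr (Sum.inr (Sum.inl p))), t =>
      -δmax p * vlb t p + (1 - vlb t p) * ∑ l, dmin p l * vlb t l
  | some (Sum.inr (Sum.inr (Sum.inr (Sum.inl p)))), t =>
      -(-δmin p * vub t p + (1 - vub t p) * ∑ l, dmax p l * vub t l)
  | some (Sum.inr (Sum.inr (Sum.inr (Sum.inr p)))), t =>
      -δmin p * vub t p + (1 - vub t p) * ∑ l, dmax p l * vub t l

set_option maxHeartbeats 2000000 in
/-- **Theorem 6, reduced-size bounds for an arbitrary partition.**
For any (not necessarily equitable) partition of the nodes into `r` cells encoded by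
`c : Fin N → Fin r`, the `N`-dimensional NIMFA viral state is bounded cellwise, at every time
`t ≥ 0`, by the `r`-dimensional lower and upper bound dynamics built from the extremal cell
degrees `d_min`, `d_max` and extremal curing rates `δ_min`, `δ_max`, provided the bounds hold
at time `0`. -/
theorem nimfa_bounds_by_equitable
    {N r : ℕ} (B : Matrix (Fin N) (Fin N) ℝ) (δ : Fin N → ℝ)
    (hδ_pos : ∀ i, 0 < δ i)
    (hB_nonneg : ∀ i j, 0 ≤ B i j)
    (hB_symm : B.IsSymm)
    (hB_irr : MatIrreducible B)
    (c : Fin N → Fin r) (hsurj : Function.Surjective c)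
    (dmin dmax : Fin r → Fin r → ℝ)
    (hdmin : ∀ p l, IsLeast
      {x : ℝ | ∃ i, c i = p ∧ x = ∑ k ∈ univ.filter (fun k => c k = l), B i k} (dmin p l))
    (hdmax : ∀ p l, IsGreatest
      {x : ℝ | ∃ i, c i = p ∧ x = ∑ k ∈ univ.filter (fun k => c k = l), B i k} (dmax p l))
    (δmin δmax : Fin r → ℝ)
    (hδmin : ∀ l, IsLeast {x : ℝ | ∃ i, c i = l ∧ x = δ i} (δmin l))
    (hδmax : ∀ l, IsGreatest {x : ℝ | ∃ i, c i = l ∧ x = δ i} (δmax l))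
    (vlb vub : ℝ → Fin r → ℝ)
    (hvlb : ∀ t : ℝ, 0 ≤ t → ∀ p : Fin r, HasDerivAt (fun s => vlb s p)
      (-δmax p * vlb t p + (1 - vlb t p) * ∑ l : Fin r, dmin p l * vlb t l) t)
    (hvub : ∀ t : ℝ, 0 ≤ t → ∀ p : Fin r, HasDerivAt (fun s => vub s p)
      (-δmin p * vub t p + (1 - vub t p) * ∑ l : Fin r, dmax p l * vub t l) t)
    (hvlb0 : ∀ p, vlb 0 p ∈ Set.Icc (0 : ℝ) 1)
    (hvub0 : ∀ p, vub 0 p ∈ Set.Icc (0 : ℝ) 1)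
    (v : ℝ → Fin N → ℝ)
    (hsol : ∀ t : ℝ, 0 ≤ t → ∀ i, HasDerivAt (fun s => v s i)
      (-δ i * v t i + (1 - v t i) * ∑ j, B i j * v t j) t)
    (hv0 : ∀ i, v 0 i ∈ Set.Icc (0 : ℝ) 1)
    (hinit : ∀ i, vlb 0 (c i) ≤ v 0 i ∧ v 0 i ≤ vub 0 (c i)) :
    ∀ t : ℝ, 0 ≤ t → ∀ i, vlb t (c i) ≤ v t i ∧ v t i ≤ vub t (c i) := by
  intro t ht i
  rcases Nat.eq_zero_or_pos N with hN0 | hN0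
  · exact absurd i.isLt (by omega)
  obtain ⟨i0⟩ : Nonempty (Fin N) := ⟨⟨0, hN0⟩⟩
  set g := nimfaComp c v vlb vub with hgdef
  set g' := nimfaCompD B δ c dmin dmax δmin δmax v vlb vub with hg'def
  set F : ℝ → ℝ := fun s => univ.sup' univ_nonempty (fun k => g k s) with hF
  have hneN : (univ : Finset (Fin N)).Nonempty := ⟨i0, mem_univ _⟩
  have hneR : (univ : Finset (Fin r)).Nonempty := ⟨c i0, mem_univ _⟩
  -- derivative of the family
  have hd : ∀ j, ∀ x ∈ Set.Icc (0:ℝ) t, HasDerivAt (g j) (g' j x) x := by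
    rintro (_ | ((i' | i' | i' | i') | (p | p | p | p))) x hx
    · exact hasDerivAt_const x 0
    · exact (hsol x hx.1 i').neg
    · exact (hsol x hx.1 i').sub_const 1
    · exact (hvlb x hx.1 (c i')).sub (hsol x hx.1 i')
    · exact (hsol x hx.1 i').sub (hvub x hx.1 (c i'))
    · exact (hvlb x hx.1 p).neg
    · exact (hvlb x hx.1 p).sub_const 1
    · exact (hvub x hx.1 p).neg
    · exact (hvub x hx.1 p).sub_const 1
  -- basic constants
  set Arow := univ.sup' hneN (fun i' => ∑ j, B i' j) with hArow
  set Adm := univ.sup' hneR (fun p => ∑ l, dmax p l) with hAdm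
  set A := max Arow Adm with hA
  set Δ := univ.sup' hneN δ with hΔ
  have hdmin_nonneg : ∀ p l, 0 ≤ dmin p l := by
    intro p l
    obtain ⟨i', -, he⟩ := (hdmin p l).1
    rw [he]
    exact sum_nonneg fun k _ => hB_nonneg i' k
  have hdmm : ∀ p l, dmin p l ≤ dmax p l := fun p l => (hdmin p l).2 (hdmax p l).1
  have hrowA : ∀ i', ∑ j, B i' j ≤ A := by
    intro i'
    have h1 : ∑ j, B i' j ≤ Arow := by
      rw [hArow]; exact Finset.le_sup' (fun i'' => ∑ j, B i'' j) (mem_univ i')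
    rw [hA]; exact le_trans h1 (le_max_left _ _)
  have hdmaxA : ∀ p, ∑ l, dmax p l ≤ A := by
    intro p
    have h1 : ∑ l, dmax p l ≤ Adm := by
      rw [hAdm]; exact Finset.le_sup' (fun p' => ∑ l, dmax p' l) (mem_univ p)
    rw [hA]; exact le_trans h1 (le_max_right _ _)
  have hdminA : ∀ p, ∑ l, dmin p l ≤ A :=
    fun p => le_trans (sum_le_sum fun l _ => hdmm p l) (hdmaxA p)
  have hA0 : (0:ℝ) ≤ A := le_trans (sum_nonneg fun j _ => hB_nonneg i0 j) (hrowA i0)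
  have hδΔ : ∀ i', δ i' ≤ Δ := by
    intro i'; rw [hΔ]; exact Finset.le_sup' δ (mem_univ i')
  have hΔ0 : (0:ℝ) ≤ Δ := le_trans (hδ_pos i0).le (hδΔ i0)
  have hδmax_le : ∀ p, δmax p ≤ Δ := by
    intro p; obtain ⟨i', -, he⟩ := (hδmax p).1; rw [he]; exact hδΔ i'
  have hδmax0 : ∀ p, 0 ≤ δmax p := by
    intro p; obtain ⟨i', -, he⟩ := (hδmax p).1; rw [he]; exact (hδ_pos i').le
  have hδmin0 : ∀ p, 0 ≤ δmin p := by
    intro p; obtain ⟨i', -, he⟩ := (hδmin p).1; rw [he]; exact (hδ_pos i').le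
  have hδmaxi : ∀ i', δ i' ≤ δmax (c i') := fun i' => (hδmax (c i')).2 ⟨i', rfl, rfl⟩
  have hδmini : ∀ i', δmin (c i') ≤ δ i' := fun i' => (hδmin (c i')).2 ⟨i', rfl, rfl⟩
  -- the sup of F on [0,t]
  have hcont : ContinuousOn F (Set.Icc 0 t) := by
    rw [hF]
    exact continuousOn_finset_sup' univ univ_nonempty g
      (fun j _ => fun x hx => ((hd j x hx).continuousAt).continuousWithinAt)
  set C := sSup (F '' Set.Icc 0 t) with hC
  have hbdd : BddAbove (F '' Set.Icc 0 t) :=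
    ((isCompact_Icc).image_of_continuousOn hcont).bddAbove
  have hFC : ∀ x ∈ Set.Icc (0:ℝ) t, F x ≤ C := fun x hx => le_csSup hbdd ⟨x, hx, rfl⟩
  have hF0 : ∀ x, (0:ℝ) ≤ F x := fun x => Finset.le_sup' (fun k => g k x) (mem_univ none)
  have hC0 : (0:ℝ) ≤ C := le_trans (hF0 0) (hFC 0 ⟨le_refl 0, ht⟩)
  set K := Δ + 4 * A * (1 + C) with hK
  have hK0 : (0:ℝ) ≤ K := by
    have := mul_nonneg hA0 (by linarith : (0:ℝ) ≤ 1 + C)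
    rw [hK]; linarith
  -- initial condition
  have h0 : univ.sup' univ_nonempty (fun k => g k 0) ≤ 0 := by
    refine Finset.sup'_le _ _ ?_
    rintro (_ | ((i' | i' | i' | i') | (p | p | p | p))) -
    · exact le_refl 0
    · show -v 0 i' ≤ 0; linarith [(hv0 i').1]
    · show v 0 i' - 1 ≤ 0; linarith [(hv0 i').2]
    · show vlb 0 (c i') - v 0 i' ≤ 0; linarith [(hinit i').1]
    · show v 0 i' - vub 0 (c i') ≤ 0; linarith [(hinit i').2]
    · show -vlb 0 p ≤ 0; linarith [(hvlb0 p).1]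
    · show vlb 0 p - 1 ≤ 0; linarith [(hvlb0 p).2]
    · show -vub 0 p ≤ 0; linarith [(hvub0 p).1]
    · show vub 0 p - 1 ≤ 0; linarith [(hvub0 p).2]
  -- main bound
  have hbound : ∀ x ∈ Set.Ico (0:ℝ) t, ∀ j, g j x = univ.sup' univ_nonempty (fun k => g k x) →
      g' j x ≤ K * univ.sup' univ_nonempty (fun k => g k x) := by
    intro x hx j hj
    have hle : ∀ k, g k x ≤ F x := fun k => Finset.le_sup' (fun k => g k x) (mem_univ k)
    set m : ℝ := univ.sup' univ_nonempty (fun k => g k x) with hm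
    have hm0 : (0:ℝ) ≤ m := hF0 x
    have hmc : m ≤ C := hFC x (Set.mem_Icc_of_Ico hx)
    have hVlo : ∀ i', -(v x i') ≤ m := fun i' => hle (some (Sum.inl (Sum.inl i')))
    have hVhi : ∀ i', v x i' - 1 ≤ m := fun i' => hle (some (Sum.inl (Sum.inr (Sum.inl i'))))
    have hLV : ∀ i', vlb x (c i') - v x i' ≤ m :=
      fun i' => hle (some (Sum.inl (Sum.inr (Sum.inr (Sum.inl i')))))
    have hVU : ∀ i', v x i' - vub x (c i') ≤ m :=
      fun i' => hle (some (Sum.inl (Sum.inr (Sum.inr (Sum.inr i')))))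
    have hLlo : ∀ p, -(vlb x p) ≤ m := fun p => hle (some (Sum.inr (Sum.inl p)))
    have hLhi : ∀ p, vlb x p - 1 ≤ m := fun p => hle (some (Sum.inr (Sum.inr (Sum.inl p))))
    have hUlo : ∀ p, -(vub x p) ≤ m := fun p => hle (some (Sum.inr (Sum.inr (Sum.inr (Sum.inl p)))))
    have hUhi : ∀ p, vub x p - 1 ≤ m := fun p => hle (some (Sum.inr (Sum.inr (Sum.inr (Sum.inr p)))))
    -- sum bounds
    have hT_lo : ∀ i', -(m * A) ≤ ∑ j', B i' j' * v x j' := by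
      intro i'
      have h1 : ∑ j', B i' j' * (-m) ≤ ∑ j', B i' j' * v x j' :=
        Finset.sum_le_sum fun j' _ =>
          mul_le_mul_of_nonneg_left (by linarith [hVlo j']) (hB_nonneg i' j')
      have h2 : ∑ j', B i' j' * (-m) = (∑ j', B i' j') * (-m) := by rw [Finset.sum_mul]
      have h3 : (∑ j', B i' j') * m ≤ A * m := mul_le_mul_of_nonneg_right (hrowA i') hm0
      nlinarith
    have hT_hi : ∀ i', ∑ j', B i' j' * v x j' ≤ A * (1 + C) := by
      intro i'
      have h1 : ∑ j', B i' j' * v x j' ≤ ∑ j', B i' j' * (1 + C) :=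
        Finset.sum_le_sum fun j' _ =>
          mul_le_mul_of_nonneg_left (by linarith [hVhi j']) (hB_nonneg i' j')
      have h2 : ∑ j', B i' j' * (1 + C) = (∑ j', B i' j') * (1 + C) := by rw [Finset.sum_mul]
      have h3 : (∑ j', B i' j') * (1 + C) ≤ A * (1 + C) :=
        mul_le_mul_of_nonneg_right (hrowA i') (by linarith)
      linarith
    have hSlb_lo : ∀ p, -(m * A) ≤ ∑ l, dmin p l * vlb x l := by
      intro p
      have h1 : ∑ l, dmin p l * (-m) ≤ ∑ l, dmin p l * vlb x l :=
        Finset.sum_le_sum fun l _ =>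
          mul_le_mul_of_nonneg_left (by linarith [hLlo l]) (hdmin_nonneg p l)
      have h2 : ∑ l, dmin p l * (-m) = (∑ l, dmin p l) * (-m) := by rw [Finset.sum_mul]
      have h3 : (∑ l, dmin p l) * m ≤ A * m := mul_le_mul_of_nonneg_right (hdminA p) hm0
      nlinarith
    have hSub_lo : ∀ p, -(m * A) ≤ ∑ l, dmax p l * vub x l := by
      intro p
      have h1 : ∑ l, dmax p l * (-m) ≤ ∑ l, dmax p l * vub x l :=
        Finset.sum_le_sum fun l _ =>
          mul_le_mul_of_nonneg_left (by linarith [hUlo l]) (le_trans (hdmin_nonneg p l) (hdmm p l))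
      have h2 : ∑ l, dmax p l * (-m) = (∑ l, dmax p l) * (-m) := by rw [Finset.sum_mul]
      have h3 : (∑ l, dmax p l) * m ≤ A * m := mul_le_mul_of_nonneg_right (hdmaxA p) hm0
      nlinarith
    have hSub_hi : ∀ p, ∑ l, dmax p l * vub x l ≤ A * (1 + C) := by
      intro p
      have h1 : ∑ l, dmax p l * vub x l ≤ ∑ l, dmax p l * (1 + C) :=
        Finset.sum_le_sum fun l _ =>
          mul_le_mul_of_nonneg_left (by linarith [hUhi l]) (le_trans (hdmin_nonneg p l) (hdmm p l))
      have h2 : ∑ l, dmax p l * (1 + C) = (∑ l, dmax p l) * (1 + C) := by rw [Finset.sum_mul]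
      have h3 : (∑ l, dmax p l) * (1 + C) ≤ A * (1 + C) :=
        mul_le_mul_of_nonneg_right (hdmaxA p) (by linarith)
      linarith
    -- grouping estimates
    have hgroup_lb : ∀ i',
        (∑ l, dmin (c i') l * vlb x l) - (∑ j', B i' j' * v x j') ≤ m * A := by
      intro i'
      have e3 : ∑ l, dmin (c i') l * vlb x l ≤ ∑ l, dmin (c i') l * max (vlb x l) 0 :=
        Finset.sum_le_sum fun l _ =>
          mul_le_mul_of_nonneg_left (le_max_left _ _) (hdmin_nonneg (c i') l)
      have e2 : ∑ l, dmin (c i') l * max (vlb x l) 0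
          ≤ ∑ l, (∑ j' ∈ univ.filter (fun j' => c j' = l), B i' j') * max (vlb x l) 0 :=
        Finset.sum_le_sum fun l _ =>
          mul_le_mul_of_nonneg_right ((hdmin (c i') l).2 ⟨i', rfl, rfl⟩) (le_max_right _ _)
      have e1 : ∑ l, (∑ j' ∈ univ.filter (fun j' => c j' = l), B i' j') * max (vlb x l) 0
          = ∑ j', B i' j' * max (vlb x (c j')) 0 :=
        (nimfa_fiber_mul_sum c (B i') (fun l => max (vlb x l) 0)).symm
      have e4 : ∑ j', B i' j' * max (vlb x (c j')) 0 ≤ ∑ j', B i' j' * (v x j' + m) :=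
        Finset.sum_le_sum fun j' _ =>
          mul_le_mul_of_nonneg_left
            (max_le (by linarith [hLV j']) (by linarith [hVlo j'])) (hB_nonneg i' j')
      have e5 : ∑ j', B i' j' * (v x j' + m) = (∑ j', B i' j' * v x j') + (∑ j', B i' j') * m := by
        rw [Finset.sum_mul, ← Finset.sum_add_distrib]
        exact Finset.sum_congr rfl fun j' _ => by ring
      have e6 : (∑ j', B i' j') * m ≤ A * m := mul_le_mul_of_nonneg_right (hrowA i') hm0
      nlinarith
    have hgroup_ub : ∀ i',
        (∑ j', B i' j' * v x j') - (∑ l, dmax (c i') l * vub x l) ≤ m * A := by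
      intro i'
      have f1 : ∑ j', B i' j' * v x j' ≤ ∑ j', B i' j' * (vub x (c j') + m) :=
        Finset.sum_le_sum fun j' _ =>
          mul_le_mul_of_nonneg_left (by linarith [hVU j']) (hB_nonneg i' j')
      have f2 : ∑ j', B i' j' * (vub x (c j') + m)
          = ∑ l, (∑ j' ∈ univ.filter (fun j' => c j' = l), B i' j') * (vub x l + m) :=
        nimfa_fiber_mul_sum c (B i') (fun l => vub x l + m)
      have f3 : ∑ l, (∑ j' ∈ univ.filter (fun j' => c j' = l), B i' j') * (vub x l + m)
          ≤ ∑ l, dmax (c i') l * (vub x l + m) :=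
        Finset.sum_le_sum fun l _ =>
          mul_le_mul_of_nonneg_right ((hdmax (c i') l).2 ⟨i', rfl, rfl⟩) (by linarith [hUlo l])
      have f4 : ∑ l, dmax (c i') l * (vub x l + m)
          = (∑ l, dmax (c i') l * vub x l) + (∑ l, dmax (c i') l) * m := by
        rw [Finset.sum_mul, ← Finset.sum_add_distrib]
        exact Finset.sum_congr rfl fun l _ => by ring
      have f5 : (∑ l, dmax (c i') l) * m ≤ A * m := mul_le_mul_of_nonneg_right (hdmaxA (c i')) hm0
      nlinarith
    -- case analysis on the maximizing component
    clear hle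
    rcases j with _ | ((i' | i' | i' | i') | (p | p | p | p))
    · show (0:ℝ) ≤ K * m
      exact mul_nonneg hK0 hm0
    · have hj' : -v x i' = m := hj
      have hvi : v x i' = -m := by linarith
      show -(-δ i' * v x i' + (1 - v x i') * ∑ j', B i' j' * v x j') ≤ K * m
      rw [hvi, hK]
      have := nimfa_est_neg (d := δ i') (S := ∑ j', B i' j' * v x j')
        (hδ_pos i').le hm0 hmc hA0 hΔ0 (hT_lo i')
      linarith
    · have hj' : v x i' - 1 = m := hj
      have hvi : v x i' = 1 + m := by linarith
      show -δ i' * v x i' + (1 - v x i') * ∑ j', B i' j' * v x j' ≤ K * m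
      rw [hvi, hK]
      have := nimfa_est_one (d := δ i') (S := ∑ j', B i' j' * v x j')
        (hδ_pos i').le hm0 hmc hA0 hΔ0 (hT_lo i')
      linarith
    · have hj' : vlb x (c i') - v x i' = m := hj
      show (-δmax (c i') * vlb x (c i') + (1 - vlb x (c i')) * ∑ l, dmin (c i') l * vlb x l)
          - (-δ i' * v x i' + (1 - v x i') * ∑ j', B i' j' * v x j') ≤ K * m
      rw [hK]
      have hmulCA : m * A ≤ C * A := mul_le_mul_of_nonneg_right hmc hA0
      exact nimfa_est_pair hm0 hmc hA0 (hδ_pos i').le (hδmaxi i') (hδmax_le (c i'))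
        (by linarith) (by linarith [hVlo i']) (by linarith [hVhi i'])
        (hgroup_lb i') (by nlinarith [hSlb_lo (c i')]) (hT_hi i')
    · have hj' : v x i' - vub x (c i') = m := hj
      show (-δ i' * v x i' + (1 - v x i') * ∑ j', B i' j' * v x j')
          - (-δmin (c i') * vub x (c i') + (1 - vub x (c i')) * ∑ l, dmax (c i') l * vub x l)
          ≤ K * m
      rw [hK]
      have hmulCA : m * A ≤ C * A := mul_le_mul_of_nonneg_right hmc hA0
      exact nimfa_est_pair hm0 hmc hA0 (hδmin0 (c i')) (hδmini i') (hδΔ i')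
        (by linarith) (by linarith [hUlo (c i')]) (by linarith [hUhi (c i')])
        (hgroup_ub i') (by nlinarith [hT_lo i']) (hSub_hi (c i'))
    · have hj' : -vlb x p = m := hj
      have hvp : vlb x p = -m := by linarith
      show -(-δmax p * vlb x p + (1 - vlb x p) * ∑ l, dmin p l * vlb x l) ≤ K * m
      rw [hvp, hK]
      have := nimfa_est_neg (d := δmax p) (S := ∑ l, dmin p l * vlb x l)
        (hδmax0 p) hm0 hmc hA0 hΔ0 (hSlb_lo p)
      linarith
    · have hj' : vlb x p - 1 = m := hj
      have hvp : vlb x p = 1 + m := by linarith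
      show -δmax p * vlb x p + (1 - vlb x p) * ∑ l, dmin p l * vlb x l ≤ K * m
      rw [hvp, hK]
      have := nimfa_est_one (d := δmax p) (S := ∑ l, dmin p l * vlb x l)
        (hδmax0 p) hm0 hmc hA0 hΔ0 (hSlb_lo p)
      linarith
    · have hj' : -vub x p = m := hj
      have hvp : vub x p = -m := by linarith
      show -(-δmin p * vub x p + (1 - vub x p) * ∑ l, dmax p l * vub x l) ≤ K * m
      rw [hvp, hK]
      have := nimfa_est_neg (d := δmin p) (S := ∑ l, dmax p l * vub x l)
        (hδmin0 p) hm0 hmc hA0 hΔ0 (hSub_lo p)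
      linarith
    · have hj' : vub x p - 1 = m := hj
      have hvp : vub x p = 1 + m := by linarith
      show -δmin p * vub x p + (1 - vub x p) * ∑ l, dmax p l * vub x l ≤ K * m
      rw [hvp, hK]
      have := nimfa_est_one (d := δmin p) (S := ∑ l, dmax p l * vub x l)
        (hδmin0 p) hm0 hmc hA0 hΔ0 (hSub_lo p)
      linarith
  -- apply the Gronwall-type lemma
  have key := gronwall_sup'_nonpos g g' K t hd hbound h0 t ⟨ht, le_refl t⟩
  have h1 : vlb t (c i) - v t i ≤ univ.sup' univ_nonempty (fun k => g k t) :=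
    Finset.le_sup' (fun k => g k t) (mem_univ (some (Sum.inl (Sum.inr (Sum.inr (Sum.inl i))))))
  have h2 : v t i - vub t (c i) ≤ univ.sup' univ_nonempty (fun k => g k t) :=
    Finset.le_sup' (fun k => g k t) (mem_univ (some (Sum.inl (Sum.inr (Sum.inr (Sum.inr i))))))
  constructor <;> linarith
end

section
/- Let V ⊆ ℝ^N be a linear subspace that is an invariant set of NIMFA and suppose S v ∈ V for every v ∈ V. Then for every v ∈ V and every w ∈ ℝ^N orthogonal to V, it holds that wᵀ diag(v) B v = 0 and wᵀ B v = 0; in particular B V ⊆ V, i.e., V is an invariant subspace of the infection rate matrix B. -/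
open Matrix Finset

/-- **orthogonality relations for invariant sets; part of the proof of
Lemma 1.** If the linear subspace `V` is an invariant set of NIMFA and `S V ⊆ V`, then for
every `v ∈ V` and every `w` orthogonal to `V` it holds that `wᵀ diag(v) B v = 0` and
`wᵀ B v = 0`; in particular `B V ⊆ V`, i.e. `V` is an invariant subspace of `B`. -/
theorem nimfa_invariant_set_B_invariant
    {N : ℕ} (B : Matrix (Fin N) (Fin N) ℝ) (δ : Fin N → ℝ)
    (hδ_pos : ∀ i, 0 < δ i)
    (hB_nonneg : ∀ i j, 0 ≤ B i j)
    (V : Submodule ℝ (Fin N → ℝ))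
    (hSV : ∀ v ∈ V, (fun i => δ i * v i) ∈ V)
    (hinv : ∀ v ∈ V, (fun i => -δ i * v i + (1 - v i) * ∑ j, B i j * v j) ∈ V) :
    (∀ v ∈ V, ∀ w : Fin N → ℝ, (∀ x ∈ V, w ⬝ᵥ x = 0) →
      w ⬝ᵥ (fun i => v i * B.mulVec v i) = 0 ∧ w ⬝ᵥ B.mulVec v = 0) ∧
    (∀ v ∈ V, B.mulVec v ∈ V) := by
  -- g v = diag(1 - v) * B v ∈ V
  have hg : ∀ v ∈ V, (fun i => (1 - v i) * B.mulVec v i) ∈ V := by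
    intro v hv
    have h := V.add_mem (hinv v hv) (hSV v hv)
    convert h using 1
    funext i
    simp [Matrix.mulVec, dotProduct]
  have hdiag : ∀ v ∈ V, (fun i => v i * B.mulVec v i) ∈ V := by
    intro v hv
    have h1 := hg v hv
    have h2 := hg (-v) (V.neg_mem hv)
    have h4 := V.smul_mem (-(1:ℝ)/2) (V.add_mem h1 h2)
    convert h4 using 1
    funext i
    simp [Matrix.mulVec_neg]
    ring
  have hB : ∀ v ∈ V, B.mulVec v ∈ V := by
    intro v hv
    have h := V.add_mem (hg v hv) (hdiag v hv)
    convert h using 1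
    funext i
    simp
    ring
  refine ⟨fun v hv w hw => ⟨hw _ (hdiag v hv), hw _ (hB v hv)⟩, hB⟩
end

section
/- Let π = {N_1,...,N_r} be a partition of {1,...,N}, let B be a symmetric N×N matrix with β_ij = b_{pl} whenever i ∈ N_p and j ∈ N_l (block-constant infection rates), and let S = diag(δ_1,...,δ_N) with δ_i = δ_j whenever i,j lie in the same cell. Let V_{≠0} = span{y_1,...,y_r}, where y_l are the normalized indicator vectors of π. Then for every ṽ ∈ V_{≠0}, the vector B ṽ - S ṽ - diag(ṽ) B ṽ lies in V_{≠0}. -/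
open Matrix Finset

/-- Submodule of functions constant on cells. -/
def cellConst {N r : ℕ} (c : Fin N → Fin r) : Submodule ℝ (Fin N → ℝ) where
  carrier := {x | ∀ i j, c i = c j → x i = x j}
  zero_mem' := by intro i j _; rfl
  add_mem' := by intro x y hx hy i j h; simp [hx i j h, hy i j h]
  smul_mem' := by intro a x hx i j h; simp [hx i j h]

lemma span_le_cellConst {N r : ℕ} (c : Fin N → Fin r) :
    Submodule.span ℝ (Set.range (indVec c)) ≤ cellConst c := by
  rw [Submodule.span_le]
  rintro _ ⟨l, rfl⟩ i j h
  simp only [indVec, h]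

lemma cellConst_mem_span {N r : ℕ} (c : Fin N → Fin r) (hsurj : Function.Surjective c)
    (x : Fin N → ℝ) (hx : ∀ i j, c i = c j → x i = x j) :
    x ∈ Submodule.span ℝ (Set.range (indVec c)) := by
  have hcard : ∀ l : Fin r, (0 : ℝ) < (Finset.univ.filter (fun k => c k = l)).card := by
    intro l
    obtain ⟨i, hi⟩ := hsurj l
    have : i ∈ Finset.univ.filter (fun k => c k = l) := by simp [hi]
    exact_mod_cast Finset.card_pos.mpr ⟨i, this⟩
  have : x = ∑ l : Fin r,
      (x (Function.surjInv hsurj l) *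
        Real.sqrt ((Finset.univ.filter (fun k => c k = l)).card)) • indVec c l := by
    funext i
    rw [Finset.sum_apply]
    rw [Finset.sum_eq_single (c i)]
    · have h1 : c (Function.surjInv hsurj (c i)) = c i :=
        Function.surjInv_eq hsurj (c i)
      have hs : Real.sqrt ((Finset.univ.filter (fun k => c k = c i)).card) ≠ 0 :=
        ne_of_gt (Real.sqrt_pos.mpr (hcard (c i)))
      simp only [Pi.smul_apply, indVec, if_pos rfl, eq_self_iff_true, if_true, smul_eq_mul]
      rw [hx _ _ h1]
      field_simp
    · intro l _ hl
      have : c i ≠ l := fun h => hl h.symm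
      simp [indVec, this]
    · simp
  rw [this]
  exact Submodule.sum_mem _ fun l _ =>
    Submodule.smul_mem _ _ (Submodule.subset_span ⟨l, rfl⟩)

/-- **Lemma 7, tangency of the NIMFA field to `V_{≠0}`.**
For block-constant infection rates `β_ij = b_{c(i) c(j)}` with `B` symmetric, and curing rates
constant on cells, the vector `B ṽ - S ṽ - diag(ṽ) B ṽ` lies in
`V_{≠0} = span{y_1,...,y_r}` for every `ṽ ∈ V_{≠0}`. -/
theorem nimfa_field_tangent_to_Vneq0
    {N r : ℕ} (B : Matrix (Fin N) (Fin N) ℝ) (δ : Fin N → ℝ)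
    (c : Fin N → Fin r) (hsurj : Function.Surjective c)
    (b : Fin r → Fin r → ℝ)
    (hblock : ∀ i j, B i j = b (c i) (c j))
    (hB_symm : B.IsSymm)
    (hδ_cell : ∀ i j, c i = c j → δ i = δ j)
    (vt : Fin N → ℝ)
    (hvt : vt ∈ Submodule.span ℝ (Set.range (indVec c))) :
    (fun i => B.mulVec vt i - δ i * vt i - vt i * B.mulVec vt i)
      ∈ Submodule.span ℝ (Set.range (indVec c)) := by
  have hvt' : ∀ i j, c i = c j → vt i = vt j := span_le_cellConst c hvt
  have hmul : ∀ i j, c i = c j → B.mulVec vt i = B.mulVec vt j := by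
    intro i j h
    show ∑ k, B i k * vt k = ∑ k, B j k * vt k
    apply Finset.sum_congr rfl
    intro k _
    rw [hblock i k, hblock j k, h]
  apply cellConst_mem_span c hsurj
  intro i j h
  rw [hmul i j h, hvt' i j h, hδ_cell i j h]
end

section
/- Let π = {N_1,...,N_r} be a partition of {1,...,N}, let B be a symmetric N×N matrix with β_ij = b_{pl} whenever i ∈ N_p and j ∈ N_l (block-constant infection rates), and let S = diag(δ_1,...,δ_N) with δ_i = δ_j whenever i,j lie in the same cell. Let V_{≠0} = span{y_1,...,y_r}, where y_l are the normalized indicator vectors of π, and suppose ker(B) equals the orthogonal complement of V_{≠0}. Then for every ṽ ∈ V_{≠0} and every v_ker ∈ ker(B), the vector S v_ker + diag(v_ker) B ṽ lies in ker(B). -/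
open Matrix Finset

/-- **Lemma 8, tangency of the NIMFA field to `ker(B)`.**
For block-constant infection rates `β_ij = b_{c(i) c(j)}` with `B` symmetric, curing rates
constant on cells, and `ker(B)` equal to the orthogonal complement of
`V_{≠0} = span{y_1,...,y_r}`, the vector `S v_ker + diag(v_ker) B ṽ` lies in `ker(B)` for
every `ṽ ∈ V_{≠0}` and every `v_ker ∈ ker(B)`. -/
theorem nimfa_field_tangent_to_kernel
    {N r : ℕ} (B : Matrix (Fin N) (Fin N) ℝ) (δ : Fin N → ℝ)
    (c : Fin N → Fin r) (hsurj : Function.Surjective c)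
    (b : Fin r → Fin r → ℝ)
    (hblock : ∀ i j, B i j = b (c i) (c j))
    (hB_symm : B.IsSymm)
    (hδ_cell : ∀ i j, c i = c j → δ i = δ j)
    (hker : ∀ w : Fin N → ℝ,
      B.mulVec w = 0 ↔ ∀ x ∈ Submodule.span ℝ (Set.range (indVec c)), w ⬝ᵥ x = 0)
    (vt : Fin N → ℝ)
    (hvt : vt ∈ Submodule.span ℝ (Set.range (indVec c)))
    (vker : Fin N → ℝ)
    (hvker : B.mulVec vker = 0) :
    B.mulVec (fun i => δ i * vker i + vker i * B.mulVec vt i) = 0 := by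
  classical
  -- cell sums of vker vanish
  have hsum : ∀ l : Fin r, ∑ j ∈ univ.filter (fun j => c j = l), vker j = 0 := by
    intro l
    have hx := (hker vker).mp hvker (indVec c l)
      (Submodule.subset_span ⟨l, rfl⟩)
    obtain ⟨j0, hj0⟩ := hsurj l
    have hcard : (0:ℝ) < ((univ.filter (fun k => c k = l)).card : ℝ) := by
      exact_mod_cast Finset.card_pos.mpr ⟨j0, by simp [hj0]⟩
    have hs : Real.sqrt ((univ.filter (fun k => c k = l)).card : ℝ) ≠ 0 :=
      ne_of_gt (Real.sqrt_pos.mpr hcard)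
    have h1 : vker ⬝ᵥ indVec c l =
        (∑ j ∈ univ.filter (fun j => c j = l), vker j) *
          (1 / Real.sqrt ((univ.filter (fun k => c k = l)).card : ℝ)) := by
      simp [dotProduct, indVec, mul_ite, mul_zero, ← Finset.sum_filter, Finset.sum_mul]
    rw [h1] at hx
    have : (1 / Real.sqrt ((univ.filter (fun k => c k = l)).card : ℝ)) ≠ 0 :=
      one_div_ne_zero hs
    exact (mul_eq_zero.mp hx).resolve_right this
  set rep := Function.surjInv hsurj with hrep
  set F : Fin r → ℝ := fun l => δ (rep l) + B.mulVec vt (rep l) with hFdef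
  have hF : ∀ j, δ j + B.mulVec vt j = F (c j) := by
    intro j
    have hc : c (rep (c j)) = c j := Function.surjInv_eq hsurj (c j)
    have hδ : δ j = δ (rep (c j)) := hδ_cell j (rep (c j)) hc.symm
    have hBv : B.mulVec vt j = B.mulVec vt (rep (c j)) := by
      simp [mulVec, dotProduct, hblock, hc]
    simp [hFdef, hδ, hBv]
  funext i
  show ∑ j, B i j * (δ j * vker j + vker j * B.mulVec vt j) = 0
  have hterm : ∀ j, B i j * (δ j * vker j + vker j * B.mulVec vt j)
      = (b (c i) (c j) * F (c j)) * vker j := by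
    intro j
    rw [hblock]
    rw [show δ j * vker j + vker j * B.mulVec vt j = (δ j + B.mulVec vt j) * vker j by ring,
      hF j]
    ring
  calc ∑ j, B i j * (δ j * vker j + vker j * B.mulVec vt j)
      = ∑ j, (b (c i) (c j) * F (c j)) * vker j := by
        exact Finset.sum_congr rfl fun j _ => hterm j
    _ = ∑ l, ∑ j ∈ univ.filter (fun j => c j = l), (b (c i) (c j) * F (c j)) * vker j := by
        exact (Finset.sum_fiberwise univ c _).symm
    _ = ∑ l, (b (c i) l * F l) * ∑ j ∈ univ.filter (fun j => c j = l), vker j := by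
        refine Finset.sum_congr rfl fun l _ => ?_
        rw [Finset.mul_sum]
        refine Finset.sum_congr rfl fun j hj => ?_
        rw [(Finset.mem_filter.mp hj).2]
    _ = 0 := by
        refine Finset.sum_eq_zero fun l _ => ?_
        rw [hsum l, mul_zero]
end

section
/- Let β, δ > 0 and N ≥ 1 with βN > δ, and set v∞ = 1 - δ/(βN), w = βN - δ and Φ = βN v∞/2 + δ. For any constants a ∈ ℝ and c₀ ∈ ℝ, the function c₂(t) = c₀ cosh(a) e^{-Φ t} sech((w/2) t + a) satisfies c₂(0) = c₀ and the linear time-varying ODE dc₂(t)/dt = -δ c₂(t) - (βN v∞/2)(1 + tanh((w/2) t + a)) c₂(t) for all t ≥ 0. -/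
/-- **closed-form solution of the kernel coefficient ODE on the complete
graph.** For `β, δ > 0`, `N ≥ 1` with `βN > δ`, set `v∞ = 1 - δ/(βN)`, `w = βN - δ` and
`Φ = βN v∞/2 + δ`. For any constants `a, c₀ ∈ ℝ`, the function
`c₂(t) = c₀ cosh(a) e^{-Φt} sech((w/2)t + a)` satisfies `c₂(0) = c₀` and
`dc₂/dt = -δ c₂ - (βN v∞/2)(1 + tanh((w/2)t + a)) c₂` for all `t ≥ 0`. -/
theorem kernel_coefficient_closed_form
    (β δ : ℝ) (N : ℕ) (hβ : 0 < β) (hδ : 0 < δ) (hN : 1 ≤ N)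
    (hslope : δ < β * N)
    (vinf w Φ : ℝ)
    (hvinf : vinf = 1 - δ / (β * N))
    (hw : w = β * N - δ)
    (hΦ : Φ = β * N * vinf / 2 + δ)
    (a c₀ : ℝ)
    (c₂ : ℝ → ℝ)
    (hc₂ : c₂ = fun t =>
      c₀ * Real.cosh a * Real.exp (-Φ * t) * (1 / Real.cosh (w / 2 * t + a))) :
    c₂ 0 = c₀ ∧
    ∀ t : ℝ, 0 ≤ t → HasDerivAt c₂
      (-δ * c₂ t - β * N * vinf / 2 * (1 + Real.tanh (w / 2 * t + a)) * c₂ t) t := by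
  have hβN : (0:ℝ) < β * N := lt_trans hδ hslope
  have hβN' : (β : ℝ) * N ≠ 0 := ne_of_gt hβN
  have hwv : β * N * vinf = w := by
    rw [hvinf, hw]; field_simp
  constructor
  · rw [hc₂]
    simp [Real.cosh_pos a |>.ne', mul_comm]
  · intro t _
    set u := w / 2 * t + a with hu
    have hcosh : Real.cosh u ≠ 0 := (Real.cosh_pos u).ne'
    have hu' : HasDerivAt (fun t : ℝ => w / 2 * t + a) (w / 2) t := by
      simpa using ((hasDerivAt_id t).const_mul (w / 2)).add_const a
    have hch : HasDerivAt (fun t : ℝ => Real.cosh (w / 2 * t + a))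
        (Real.sinh u * (w / 2)) t := hu'.cosh
    have hinv : HasDerivAt (fun t : ℝ => (Real.cosh (w / 2 * t + a))⁻¹)
        (-(Real.sinh u * (w / 2)) / (Real.cosh u) ^ 2) t := hch.inv hcosh
    have hexp : HasDerivAt (fun t : ℝ => Real.exp (-Φ * t))
        (Real.exp (-Φ * t) * (-Φ)) t := by
      simpa using (((hasDerivAt_id t).const_mul (-Φ)).exp)
    have hmul := (hexp.mul hinv).const_mul (c₀ * Real.cosh a)
    have heq : c₂ = fun t =>
        c₀ * Real.cosh a * (Real.exp (-Φ * t) * (Real.cosh (w / 2 * t + a))⁻¹) := by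
      rw [hc₂]; funext s; rw [one_div]; ring
    rw [heq]
    refine hmul.congr_deriv ?_
    symm
    simp only [Real.tanh_eq_sinh_div_cosh, one_div, ← hu]
    rw [hΦ, ← hwv]
    generalize Real.sinh u = S
    generalize hE : Real.exp (-(β * ↑N * vinf / 2 + δ) * t) = E
    revert hcosh
    generalize Real.cosh u = CH
    intro hCH
    field_simp
    ring
end
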